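/- arXiv:1011.1701 — 4 statements merged into one kernel-verified Lean document; each statement's English description precedes it below -/
import Mathlib

section
/- Under the variable–variable block of covariance evolution with its initial conditions, for all k, s ∈ L and all y ∈ (0,1] the quantity U^{(l_k;l_s)} := δ^{l_k,l_k}/(k l̂_k)² − δ^{l_s,l_s}/(s l̂_s)² satisfies U^{(l_k;l_s)} = −(ε y^k − 1)/(k l̂_k) + (ε y^s − 1)/(s l̂_s) + (2ε/e)[(y^k − 1)/k − (y^s − 1)/s]. (Lemma 1, equation (11).) -/
open Finset

namespace LDPC

/-- λ(y) = Σ_{k∈L} λ_k y^{k-1} -/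
noncomputable def lamP (L : Finset ℕ) (lam : ℕ → ℝ) (y : ℝ) : ℝ :=
  ∑ k ∈ L, lam k * y ^ (k - 1)

/-- λ'(y) = Σ_{k∈L} (k-1) λ_k y^{k-2} -/
noncomputable def lamD (L : Finset ℕ) (lam : ℕ → ℝ) (y : ℝ) : ℝ :=
  ∑ k ∈ L, ((k : ℝ) - 1) * lam k * y ^ (k - 2)

/-- λ''(y) = Σ_{k∈L} (k-1)(k-2) λ_k y^{k-3} -/
noncomputable def lamDD (L : Finset ℕ) (lam : ℕ → ℝ) (y : ℝ) : ℝ :=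
  ∑ k ∈ L, ((k : ℝ) - 1) * ((k : ℝ) - 2) * lam k * y ^ (k - 3)

/-- ρ(z) = Σ_{k∈R} ρ_k z^{k-1} -/
noncomputable def rhoP (R : Finset ℕ) (rho : ℕ → ℝ) (z : ℝ) : ℝ :=
  ∑ k ∈ R, rho k * z ^ (k - 1)

/-- ρ'(z) = Σ_{k∈R} (k-1) ρ_k z^{k-2} -/
noncomputable def rhoD (R : Finset ℕ) (rho : ℕ → ℝ) (z : ℝ) : ℝ :=
  ∑ k ∈ R, ((k : ℝ) - 1) * rho k * z ^ (k - 2)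

/-- x = ελ(y) -/
noncomputable def xF (L : Finset ℕ) (lam : ℕ → ℝ) (ε y : ℝ) : ℝ := ε * lamP L lam y

/-- x' = ελ'(y) -/
noncomputable def xD (L : Finset ℕ) (lam : ℕ → ℝ) (ε y : ℝ) : ℝ := ε * lamD L lam y

/-- x'' = ελ''(y) -/
noncomputable def xDD (L : Finset ℕ) (lam : ℕ → ℝ) (ε y : ℝ) : ℝ := ε * lamDD L lam y

/-- e = xy -/
noncomputable def eF (L : Finset ℕ) (lam : ℕ → ℝ) (ε y : ℝ) : ℝ := xF L lam ε y * y

/-- a = (x'y + x)/x -/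
noncomputable def aF (L : Finset ℕ) (lam : ℕ → ℝ) (ε y : ℝ) : ℝ :=
  (xD L lam ε y * y + xF L lam ε y) / xF L lam ε y

/-- l̂_k(y) = ε λ_k y^k -/
noncomputable def lhat (lam : ℕ → ℝ) (ε : ℝ) (k : ℕ) (y : ℝ) : ℝ := ε * lam k * y ^ k

/-- r̂_j(y); for j = 1 the special formula x(y-1+ρ(1-x)), else Σ_{i∈R} ρ_i C(i-1,j-1) x^j (1-x)^{i-j}. -/
noncomputable def rhat (L R : Finset ℕ) (lam rho : ℕ → ℝ) (ε : ℝ) (j : ℕ) (y : ℝ) : ℝ :=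
  if j = 1 then xF L lam ε y * (y - 1 + rhoP R rho (1 - xF L lam ε y))
  else ∑ i ∈ R, rho i * ((i - 1).choose (j - 1) : ℝ) * xF L lam ε y ^ j *
    (1 - xF L lam ε y) ^ (i - j)

/-- G_j(y) = j(r̂_{j+1} - r̂_j)/x for j ≤ d_c - 1, and G_{d_c}(y) = -d_c r̂_{d_c}/x. -/
noncomputable def Gf (L R : Finset ℕ) (lam rho : ℕ → ℝ) (ε : ℝ) (dc j : ℕ) (y : ℝ) : ℝ :=
  if j = dc then -((dc : ℝ) * rhat L R lam rho ε dc y) / xF L lam ε y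
  else (j : ℝ) * (rhat L R lam rho ε (j + 1) y - rhat L R lam rho ε j y) / xF L lam ε y

/-- F(y) = Σ_{k∈L} (λ_k/k)[ε²(y^k-1)² + ε(y^k-1)] -/
noncomputable def Ff (L : Finset ℕ) (lam : ℕ → ℝ) (ε y : ℝ) : ℝ :=
  ∑ k ∈ L, lam k / (k : ℝ) * (ε ^ 2 * (y ^ k - 1) ^ 2 + ε * (y ^ k - 1))

/-- F'(y) = 2Σ_{k∈L} ε²λ_k y^{2k-1} - (ε - ε̃)x -/
noncomputable def Fd (L : Finset ℕ) (lam : ℕ → ℝ) (ε y : ℝ) : ℝ :=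
  2 * ∑ k ∈ L, ε ^ 2 * lam k * y ^ (2 * k - 1) - (ε - (1 - ε)) * xF L lam ε y

/-- V_{i,j}(y) = Σ_{s∈R} sρ_s C(s-1,i-1)C(s-1,j-1) x^{i+j} (1-x)^{2s-i-j} -/
noncomputable def Vf (L R : Finset ℕ) (lam rho : ℕ → ℝ) (ε : ℝ) (i j : ℕ) (y : ℝ) : ℝ :=
  ∑ s ∈ R, (s : ℝ) * rho s * ((s - 1).choose (i - 1) : ℝ) * ((s - 1).choose (j - 1) : ℝ) *
    xF L lam ε y ^ (i + j) * (1 - xF L lam ε y) ^ (2 * s - i - j)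

/-- The variable–variable block of covariance evolution, with its initial conditions. -/
def CEvv (L : Finset ℕ) (lam : ℕ → ℝ) (ε : ℝ) (δll : ℕ → ℕ → ℝ → ℝ) : Prop :=
  (∀ k ∈ L, ∀ s ∈ L, ∀ y ∈ Set.Ioc (0 : ℝ) 1,
    HasDerivWithinAt (δll k s)
      (-(xF L lam ε y) *
          (((s : ℝ) * lhat lam ε s y / eF L lam ε y ^ 2) * ∑ t ∈ L, δll k t y
            + ((k : ℝ) * lhat lam ε k y / eF L lam ε y ^ 2) * ∑ t ∈ L, δll s t y
            - (((k : ℝ) + (s : ℝ)) / eF L lam ε y) * δll k s y)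
        - xF L lam ε y * (k : ℝ) * (s : ℝ) * (lhat lam ε k y / eF L lam ε y) *
            ((if k = s then (1 : ℝ) else 0) - lhat lam ε s y / eF L lam ε y))
      (Set.Ioc 0 1) y)
  ∧ ∀ k ∈ L, ∀ s ∈ L,
      δll k s 1 = (if k = s then (1 : ℝ) else 0) * (k : ℝ) * lam k * ε * (1 - ε)

/-- The variable–check block of covariance evolution, with its initial conditions. -/
def CEvc (L R : Finset ℕ) (lam rho : ℕ → ℝ) (ε : ℝ) (dc : ℕ)
    (δll δlr : ℕ → ℕ → ℝ → ℝ) : Prop :=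
  (∀ k ∈ L, ∀ j ∈ Finset.Icc 1 (dc - 1), ∀ y ∈ Set.Ioc (0 : ℝ) 1,
    HasDerivWithinAt (δlr k j)
      (2 * (xD L lam ε y / eF L lam ε y) * Gf L R lam rho ε dc j y * ∑ t ∈ L, δll k t y
        - (Gf L R lam rho ε dc j y / y ^ 2) * ∑ i ∈ L, ((i : ℝ) - 1) * δll k i y
        - xF L lam ε y * (aF L lam ε y - (k : ℝ)) * ((k : ℝ) * lhat lam ε k y / eF L lam ε y)
            * (Gf L R lam rho ε dc j y / y)
        - ((k : ℝ) * lhat lam ε k y / (eF L lam ε y * y)) * ∑ t ∈ L, δlr t j y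
        + ((k : ℝ) / y) * δlr k j y
        - (j : ℝ) * (xD L lam ε y / xF L lam ε y) *
            ((if j + 1 = dc then
                (∑ t ∈ L, δll k t y) - ∑ j' ∈ Finset.Icc 1 (dc - 1), δlr k j' y
              else δlr k (j + 1) y) - δlr k j y))
      (Set.Ioc 0 1) y)
  ∧ ∀ k ∈ L, ∀ j ∈ Finset.Icc 1 (dc - 1),
      δlr k j 1 = -((k : ℝ) * lam k * ε * (1 - ε)) * Gf L R lam rho ε dc j 1

/-- The check–check block of covariance evolution, with symmetry and initial conditions. -/
def CErr (L R : Finset ℕ) (lam rho : ℕ → ℝ) (ε : ℝ) (dc : ℕ)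
    (δlr δrr : ℕ → ℕ → ℝ → ℝ) : Prop :=
  (∀ i ∈ Finset.Icc 1 (dc - 1), ∀ j ∈ Finset.Icc 1 (dc - 1), ∀ y ∈ Set.Ioc (0 : ℝ) 1,
      δrr i j y = δrr j i y)
  ∧ (∀ i ∈ Finset.Icc 1 (dc - 1), ∀ j ∈ Finset.Icc 1 (dc - 1), ∀ y ∈ Set.Ioc (0 : ℝ) 1,
    HasDerivWithinAt (δrr i j)
      (-(xD L lam ε y / xF L lam ε y) *
          ((i : ℝ) * (if i + 1 = dc then
                (∑ k ∈ L, δlr k j y) - ∑ i' ∈ Finset.Icc 1 (dc - 1), δrr i' j y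
              else δrr (i + 1) j y)
            + (j : ℝ) * (if j + 1 = dc then
                (∑ k ∈ L, δlr k i y) - ∑ i' ∈ Finset.Icc 1 (dc - 1), δrr i' i y
              else δrr (j + 1) i y)
            - ((i : ℝ) + (j : ℝ)) * δrr i j y)
        + (∑ k ∈ L, ((2 * aF L lam ε y - (k : ℝ) - 1) / y ^ 2) *
            (δlr k j y * Gf L R lam rho ε dc i y + δlr k i y * Gf L R lam rho ε dc j y))
        - xF L lam ε y *
            (((xDD L lam ε y * xF L lam ε y - xD L lam ε y ^ 2) / xF L lam ε y ^ 2) *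
                Gf L R lam rho ε dc i y * Gf L R lam rho ε dc j y
              + (i : ℝ) * (j : ℝ) * (xD L lam ε y / xF L lam ε y ^ 2) *
                  ((if i = j then rhat L R lam rho ε (j + 1) y + rhat L R lam rho ε j y else 0)
                    - (if i = j + 1 then rhat L R lam rho ε i y else 0)
                    - (if j = i + 1 then rhat L R lam rho ε j y else 0))))
      (Set.Ioc 0 1) y)
  ∧ ∀ i ∈ Finset.Icc 1 (dc - 1), ∀ j ∈ Finset.Icc 1 (dc - 1),
      δrr i j 1 = (if i = j then (i : ℝ) * rhat L R lam rho ε i 1 else 0)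
        - Vf L R lam rho ε i j 1
        + (∑ k ∈ L, ((k : ℝ) - 1) * lam k) * ε * (1 - ε) *
            Gf L R lam rho ε dc i 1 * Gf L R lam rho ε dc j 1

section Aux

variable (L : Finset ℕ) (lam : ℕ → ℝ) (ε : ℝ)

noncomputable def ee (y : ℝ) : ℝ := ∑ t ∈ L, ε * lam t * y ^ t
noncomputable def MM (y : ℝ) : ℝ := ∑ t ∈ L, (t : ℝ) * (ε * lam t * y ^ t)
noncomputable def BB (y : ℝ) : ℝ := ∑ t ∈ L, ε * lam t * y ^ t * y ^ t
noncomputable def QQ (y : ℝ) : ℝ :=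
  2 * ee L lam ε y * Real.log y + (2 * ε - 1) * ∑ t ∈ L, ε * lam t * y ^ t / t
    - ε * ∑ t ∈ L, ε * lam t * y ^ t * y ^ t / t + ε * (1 - ε) * ∑ t ∈ L, lam t / t
noncomputable def GG (k : ℕ) (y : ℝ) : ℝ := -Real.log y + ε * (y ^ k - 1) / k
noncomputable def mm (k : ℕ) (y : ℝ) : ℝ := (k : ℝ) * (ε * lam k * y ^ k)
noncomputable def dbar (k s : ℕ) (y : ℝ) : ℝ :=
  (if k = s then mm lam ε k y * (1 - ε * y ^ k) else 0)
    + mm lam ε k y * mm lam ε s y *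
        (QQ L lam ε y + ee L lam ε y * GG ε k y + ee L lam ε y * GG ε s y) / ee L lam ε y ^ 2

variable {L lam ε}

lemma eF_eq (hL2 : ∀ k ∈ L, 2 ≤ k) (y : ℝ) : eF L lam ε y = ee L lam ε y := by
  unfold eF xF lamP ee
  rw [Finset.mul_sum, Finset.sum_mul]
  refine Finset.sum_congr rfl fun t ht => ?_
  have h1 : 1 ≤ t := le_trans one_le_two (hL2 t ht)
  have hp : y ^ t = y ^ (t - 1) * y := by
    rw [← pow_succ, Nat.sub_add_cancel h1]
  rw [hp]; ring

lemma ee_pos (hL : L.Nonempty) (hlamPos : ∀ k ∈ L, 0 < lam k) (hε : 0 < ε) {y : ℝ}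
    (hy : 0 < y) : 0 < ee L lam ε y :=
  Finset.sum_pos (fun t ht => mul_pos (mul_pos hε (hlamPos t ht)) (pow_pos hy t)) hL

lemma xF_eq (hL2 : ∀ k ∈ L, 2 ≤ k) {y : ℝ} (hy : y ≠ 0) :
    xF L lam ε y = ee L lam ε y / y := by
  rw [← eF_eq hL2, eF]; field_simp

lemma hasDerivAt_pow' {t : ℕ} (ht : 1 ≤ t) {y : ℝ} (hy : y ≠ 0) :
    HasDerivAt (fun y : ℝ => y ^ t) ((t : ℝ) * y ^ t / y) y := by
  have h : HasDerivAt (fun y : ℝ => y ^ t) _ y := hasDerivAt_pow t y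
  convert h using 1
  have : t - 1 + 1 = t := Nat.sub_add_cancel ht
  rw [← this, pow_succ]
  field_simp; ring_nf; simp

lemma hasDerivAt_ee (hL2 : ∀ k ∈ L, 2 ≤ k) {y : ℝ} (hy : y ≠ 0) :
    HasDerivAt (ee L lam ε) (MM L lam ε y / y) y := by
  have : HasDerivAt (ee L lam ε) (∑ t ∈ L, (t : ℝ) * (ε * lam t * y ^ t) / y) y := by
    refine HasDerivAt.fun_sum fun t ht => ?_
    have h := (hasDerivAt_pow' (le_trans one_le_two (hL2 t ht)) hy).const_mul (ε * lam t)
    convert h using 1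
    · rfl
    ring
  convert this using 1
  rw [MM, Finset.sum_div]

lemma hasDerivAt_mm (hk : 1 ≤ k) {y : ℝ} (hy : y ≠ 0) :
    HasDerivAt (mm lam ε k) ((k : ℝ) * mm lam ε k y / y) y := by
  have h := (hasDerivAt_pow' hk hy).const_mul ((k : ℝ) * (ε * lam k))
  convert h using 1
  · rfl
  · rfl
  · ext z; rw [mm]; ring
  · rw [mm]; field_simp

lemma hasDerivAt_GG {k : ℕ} (hk : 1 ≤ k) {y : ℝ} (hy : 0 < y) :
    HasDerivAt (GG ε k) ((ε * y ^ k - 1) / y) y := by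
  have hlog := Real.hasDerivAt_log (ne_of_gt hy)
  have hp := ((hasDerivAt_pow' hk (ne_of_gt hy)).sub_const 1).const_mul (ε / k)
  have h := (hlog.neg).add (by simpa [mul_comm, mul_div_assoc, div_div] using hp :
    HasDerivAt (fun y : ℝ => ε / k * (y ^ k - 1)) (ε / k * ((k : ℝ) * y ^ k / y)) y)
  have hk0 : (k : ℝ) ≠ 0 := Nat.cast_ne_zero.2 (by omega)
  convert h using 1
  · rfl
  · rfl
  · ext z; rw [GG]; simp only [Pi.add_apply, Pi.neg_apply]; ring
  · field_simp; ring

lemma hasDerivAt_QQ (hL2 : ∀ k ∈ L, 2 ≤ k) {y : ℝ} (hy : 0 < y) :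
    HasDerivAt (QQ L lam ε)
      ((2 * MM L lam ε y * Real.log y + (1 + 2 * ε) * ee L lam ε y - 2 * ε * BB L lam ε y) / y)
      y := by
  have hy' : y ≠ 0 := ne_of_gt hy
  have h1 : HasDerivAt (fun y => 2 * ee L lam ε y * Real.log y)
      (2 * (MM L lam ε y / y) * Real.log y + 2 * ee L lam ε y * (1 / y)) y := by
    have hh := ((hasDerivAt_ee (lam := lam) (ε := ε) hL2 hy').const_mul 2).mul
      (Real.hasDerivAt_log hy')
    convert hh using 1
    · rfl
    · rfl
    · rfl
    ring
  have h2 : HasDerivAt (fun y => ∑ t ∈ L, ε * lam t * y ^ t / t) (ee L lam ε y / y) y := by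
    have : HasDerivAt (fun y => ∑ t ∈ L, ε * lam t * y ^ t / t)
        (∑ t ∈ L, ε * lam t * y ^ t / y) y := by
      refine HasDerivAt.fun_sum fun t ht => ?_
      have ht1 : 1 ≤ t := le_trans one_le_two (hL2 t ht)
      have ht0 : (t : ℝ) ≠ 0 := Nat.cast_ne_zero.2 (by omega)
      have h := (hasDerivAt_pow' ht1 hy').const_mul (ε * lam t / t)
      convert h using 1
      · rfl
      · ext z; ring
      · field_simp
    convert this using 1
    rw [ee, Finset.sum_div]
  have h3 : HasDerivAt (fun y => ∑ t ∈ L, ε * lam t * y ^ t * y ^ t / t)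
      (2 * BB L lam ε y / y) y := by
    have hs : HasDerivAt (fun y => ∑ t ∈ L, ε * lam t * y ^ t * y ^ t / t)
        (∑ t ∈ L, 2 * (ε * lam t * y ^ t * y ^ t) / y) y := by
      refine HasDerivAt.fun_sum fun t ht => ?_
      have ht1 : 1 ≤ t := le_trans one_le_two (hL2 t ht)
      have ht0 : (t : ℝ) ≠ 0 := Nat.cast_ne_zero.2 (by omega)
      have hq : ∀ z : ℝ, ε * lam t * z ^ t * z ^ t / t = ε * lam t / t * z ^ (t + t) := by
        intro z; rw [pow_add]; ring
      have h := (hasDerivAt_pow' (by omega : 1 ≤ t + t) hy').const_mul (ε * lam t / t)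
      simp only [hq]
      convert h using 1
      · rfl
      push_cast
      rw [pow_add]
      field_simp; ring
    have heq : (2 : ℝ) * BB L lam ε y / y = ∑ t ∈ L, 2 * (ε * lam t * y ^ t * y ^ t) / y := by
      rw [BB, Finset.mul_sum, Finset.sum_div]
    rw [heq]; exact hs
  have h := ((h1.add (h2.const_mul (2 * ε - 1))).sub (h3.const_mul ε)).add_const
    (ε * (1 - ε) * ∑ t ∈ L, lam t / t)
  convert h using 1
  · rfl
  · rfl
  · rfl
  field_simp; ring

lemma sum_mm_GG (hL2 : ∀ k ∈ L, 2 ≤ k) (y : ℝ) :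
    ∑ t ∈ L, mm lam ε t y * GG ε t y
      = -(MM L lam ε y) * Real.log y + ε * (BB L lam ε y - ee L lam ε y) := by
  have hterm : ∀ t ∈ L, mm lam ε t y * GG ε t y
      = -Real.log y * ((t : ℝ) * (ε * lam t * y ^ t))
        + ε * ((ε * lam t * y ^ t * y ^ t) - (ε * lam t * y ^ t)) := by
    intro t ht
    have ht0 : (t : ℝ) ≠ 0 := Nat.cast_ne_zero.2 (by have := hL2 t ht; omega)
    rw [mm, GG]; field_simp
  rw [Finset.sum_congr rfl hterm, Finset.sum_add_distrib, ← Finset.mul_sum, ← Finset.mul_sum,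
    Finset.sum_sub_distrib, MM, BB, ee]
  ring

lemma sum_mm (y : ℝ) : ∑ t ∈ L, mm lam ε t y = MM L lam ε y := rfl

lemma sum_dbar (hL2 : ∀ k ∈ L, 2 ≤ k) {k : ℕ} (hk : k ∈ L) (y : ℝ) :
    ∑ t ∈ L, dbar L lam ε k t y
      = mm lam ε k y * (1 - ε * y ^ k)
        + mm lam ε k y * (MM L lam ε y * QQ L lam ε y
            + ee L lam ε y * MM L lam ε y * GG ε k y
            + ee L lam ε y * (-(MM L lam ε y) * Real.log y
                + ε * (BB L lam ε y - ee L lam ε y))) / ee L lam ε y ^ 2 := by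
  unfold dbar
  rw [Finset.sum_add_distrib, Finset.sum_ite_eq, if_pos hk]
  congr 1
  have hterm : ∀ t ∈ L,
      mm lam ε k y * mm lam ε t y *
          (QQ L lam ε y + ee L lam ε y * GG ε k y + ee L lam ε y * GG ε t y) / ee L lam ε y ^ 2
        = ((QQ L lam ε y + ee L lam ε y * GG ε k y) * mm lam ε t y
            + ee L lam ε y * (mm lam ε t y * GG ε t y)) * (mm lam ε k y / ee L lam ε y ^ 2) := by
    intro t _; ring
  rw [Finset.sum_congr rfl hterm, ← Finset.sum_mul, Finset.sum_add_distrib, ← Finset.mul_sum,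
    ← Finset.mul_sum, sum_mm, sum_mm_GG hL2]
  ring

set_option maxHeartbeats 3000000 in
lemma dbar_deriv (hL : L.Nonempty) (hL2 : ∀ k ∈ L, 2 ≤ k) (hlamPos : ∀ t ∈ L, 0 < lam t)
    (hε : 0 < ε) {k s : ℕ} (hk : k ∈ L) (hs : s ∈ L) {y : ℝ} (hy : 0 < y) :
    HasDerivAt (dbar L lam ε k s)
      (-(xF L lam ε y) *
          (((s : ℝ) * lhat lam ε s y / eF L lam ε y ^ 2) * ∑ t ∈ L, dbar L lam ε k t y
            + ((k : ℝ) * lhat lam ε k y / eF L lam ε y ^ 2) * ∑ t ∈ L, dbar L lam ε s t y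
            - (((k : ℝ) + (s : ℝ)) / eF L lam ε y) * dbar L lam ε k s y)
        - xF L lam ε y * (k : ℝ) * (s : ℝ) * (lhat lam ε k y / eF L lam ε y) *
            ((if k = s then (1 : ℝ) else 0) - lhat lam ε s y / eF L lam ε y)) y := by
  have hy' : y ≠ 0 := ne_of_gt hy
  have hk1 : 1 ≤ k := le_trans one_le_two (hL2 k hk)
  have hs1 : 1 ≤ s := le_trans one_le_two (hL2 s hs)
  have hk0 : (k : ℝ) ≠ 0 := Nat.cast_ne_zero.2 (by omega)
  have hs0 : (s : ℝ) ≠ 0 := Nat.cast_ne_zero.2 (by omega)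
  have hE : 0 < ee L lam ε y := ee_pos hL hlamPos hε hy
  have hE' : ee L lam ε y ≠ 0 := ne_of_gt hE
  have hQ := hasDerivAt_QQ (lam := lam) (ε := ε) hL2 hy
  have hGk := hasDerivAt_GG (ε := ε) hk1 hy
  have hGs := hasDerivAt_GG (ε := ε) hs1 hy
  have hmk := hasDerivAt_mm (lam := lam) (ε := ε) (k := k) hk1 hy'
  have hms := hasDerivAt_mm (lam := lam) (ε := ε) (k := s) hs1 hy'
  have hee := hasDerivAt_ee (lam := lam) (ε := ε) hL2 hy'
  have hP : HasDerivAt (fun y => QQ L lam ε y + ee L lam ε y * GG ε k y + ee L lam ε y * GG ε s y)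
      ((2 * MM L lam ε y * Real.log y + (1 + 2 * ε) * ee L lam ε y - 2 * ε * BB L lam ε y) / y
        + (MM L lam ε y / y * GG ε k y + ee L lam ε y * ((ε * y ^ k - 1) / y))
        + (MM L lam ε y / y * GG ε s y + ee L lam ε y * ((ε * y ^ s - 1) / y))) y :=
    (hQ.add (hee.mul hGk)).add (hee.mul hGs)
  have hnum := (hmk.mul hms).mul hP
  have hden := hee.pow 2
  have hfrac := hnum.div hden (pow_ne_zero 2 hE')
  have hdiag : HasDerivAt (fun y => mm lam ε k y * (1 - ε * y ^ k))
      ((k : ℝ) * mm lam ε k y / y * (1 - ε * y ^ k)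
        + mm lam ε k y * (0 - ε * ((k : ℝ) * y ^ k / y))) y :=
    hmk.mul ((hasDerivAt_const y (1 : ℝ)).sub ((hasDerivAt_pow' hk1 hy').const_mul ε))
  rw [show xF L lam ε y = ee L lam ε y / y from xF_eq hL2 hy', eF_eq hL2,
    sum_dbar hL2 hk y, sum_dbar hL2 hs y]
  by_cases hks : k = s
  · subst hks
    have h := hdiag.add hfrac
    have hfun : dbar L lam ε k k = fun y => mm lam ε k y * (1 - ε * y ^ k)
        + mm lam ε k y * mm lam ε k y *
            (QQ L lam ε y + ee L lam ε y * GG ε k y + ee L lam ε y * GG ε k y)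
              / ee L lam ε y ^ 2 := by
      funext z; rw [dbar, if_pos rfl]
    rw [hfun]
    convert h using 1
    · rfl
    · rfl
    · rfl
    simp only [dbar, lhat, mm, GG, if_pos rfl, Pi.mul_apply, Pi.div_apply, Pi.pow_apply, ↓reduceIte]
    field_simp
    ring
  · have h := ((hasDerivAt_const y (0 : ℝ)).add hfrac)
    have hfun : dbar L lam ε k s = fun y => 0
        + mm lam ε k y * mm lam ε s y *
            (QQ L lam ε y + ee L lam ε y * GG ε k y + ee L lam ε y * GG ε s y)
              / ee L lam ε y ^ 2 := by
      funext z; rw [dbar, if_neg hks]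
    rw [hfun]
    convert h using 1
    · rfl
    · rfl
    · rfl
    simp only [dbar, lhat, mm, GG, if_neg hks, Pi.mul_apply, Pi.div_apply, Pi.pow_apply]
    field_simp
    ring

lemma QQ_one : QQ L lam ε 1 = 0 := by
  unfold QQ
  have h2 : ∑ t ∈ L, ε * lam t * (1 : ℝ) ^ t / t = ε * ∑ t ∈ L, lam t / t := by
    rw [Finset.mul_sum]
    exact Finset.sum_congr rfl fun t _ => by rw [one_pow]; ring
  have h3 : ∑ t ∈ L, ε * lam t * (1 : ℝ) ^ t * 1 ^ t / t = ε * ∑ t ∈ L, lam t / t := by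
    rw [Finset.mul_sum]
    exact Finset.sum_congr rfl fun t _ => by rw [one_pow]; ring
  rw [h2, h3, Real.log_one]
  ring

lemma GG_one {k : ℕ} : GG ε k 1 = 0 := by simp [GG]

lemma dbar_one (k s : ℕ) :
    dbar L lam ε k s 1 = (if k = s then (1 : ℝ) else 0) * k * lam k * ε * (1 - ε) := by
  rw [dbar, QQ_one, GG_one, GG_one]
  by_cases hks : k = s
  · subst hks
    rw [if_pos rfl, if_pos rfl, mm]
    ring
  · rw [if_neg hks, if_neg hks]
    ring

end Aux

/-- Uniqueness of solutions to the variable-variable system. -/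
lemma CEvv_unique {L : Finset ℕ} {lam : ℕ → ℝ} {ε : ℝ}
    (hL : L.Nonempty) (hL2 : ∀ k ∈ L, 2 ≤ k)
    (hlamPos : ∀ t ∈ L, 0 < lam t) (hε : 0 < ε)
    {f g : ℕ → ℕ → ℝ → ℝ} (hf : CEvv L lam ε f) (hg : CEvv L lam ε g) :
    ∀ k ∈ L, ∀ s ∈ L, ∀ y ∈ Set.Ioc (0 : ℝ) 1, f k s y = g k s y := by
  intro k hk s hs a ha
  obtain ⟨ha0, ha1⟩ := ha
  have hsub : Set.Icc a 1 ⊆ Set.Ioc (0 : ℝ) 1 := fun z hz => ⟨lt_of_lt_of_le ha0 hz.1, hz.2⟩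
  set Dm : ℝ := (L.max' hL : ℝ) with hDm
  have hDm0 : 0 ≤ Dm := Nat.cast_nonneg _
  have hle : ∀ u ∈ L, (u : ℝ) ≤ Dm := fun u hu => Nat.cast_le.2 (L.le_max' u hu)
  set K : ℝ := (2 * Dm * L.card + 2 * Dm) / a with hK
  set F : ℝ → (↥L × ↥L → ℝ) := fun t p => f p.1.1 p.2.1 (1 + a - t) - g p.1.1 p.2.1 (1 + a - t)
    with hF
  set F' : ℝ → (↥L × ↥L → ℝ) := fun t p =>
    xF L lam ε (1 + a - t) *
      (((p.2.1 : ℝ) * lhat lam ε p.2.1 (1 + a - t) / eF L lam ε (1 + a - t) ^ 2) *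
          ∑ u ∈ L, (f p.1.1 u (1 + a - t) - g p.1.1 u (1 + a - t))
        + ((p.1.1 : ℝ) * lhat lam ε p.1.1 (1 + a - t) / eF L lam ε (1 + a - t) ^ 2) *
          ∑ u ∈ L, (f p.2.1 u (1 + a - t) - g p.2.1 u (1 + a - t))
        - (((p.1.1 : ℝ) + (p.2.1 : ℝ)) / eF L lam ε (1 + a - t)) *
            (f p.1.1 p.2.1 (1 + a - t) - g p.1.1 p.2.1 (1 + a - t))) with hF'
  have hmaps : Set.MapsTo (fun t : ℝ => 1 + a - t) (Set.Icc a 1) (Set.Icc a 1) := by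
    intro z hz
    simp only [Set.mem_Icc] at hz ⊢
    constructor <;> linarith [hz.1, hz.2]
  have hD : ∀ t ∈ Set.Icc a 1, HasDerivWithinAt F (F' t) (Set.Icc a 1) t := by
    intro t ht
    refine hasDerivWithinAt_pi.2 fun p => ?_
    have hyIoc : (1 + a - t) ∈ Set.Ioc (0 : ℝ) 1 := hsub (hmaps ht)
    have hfd := hf.1 p.1.1 p.1.2 p.2.1 p.2.2 (1 + a - t) hyIoc
    have hgd := hg.1 p.1.1 p.1.2 p.2.1 p.2.2 (1 + a - t) hyIoc
    have hdiff := (hfd.sub hgd).mono hsub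
    have hc : HasDerivWithinAt (fun t : ℝ => 1 + a - t) (-1) (Set.Icc a 1) t :=
      (((hasDerivAt_id t).const_sub (1 + a))).hasDerivWithinAt
    have hcomp := HasDerivWithinAt.comp t hdiff hc hmaps
    have hval : F' t p = (-(xF L lam ε (1 + a - t)) *
          (((p.2.1 : ℝ) * lhat lam ε p.2.1 (1 + a - t) / eF L lam ε (1 + a - t) ^ 2) *
              ∑ u ∈ L, f p.1.1 u (1 + a - t)
            + ((p.1.1 : ℝ) * lhat lam ε p.1.1 (1 + a - t) / eF L lam ε (1 + a - t) ^ 2) *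
              ∑ u ∈ L, f p.2.1 u (1 + a - t)
            - (((p.1.1 : ℝ) + (p.2.1 : ℝ)) / eF L lam ε (1 + a - t)) * f p.1.1 p.2.1 (1 + a - t))
        - xF L lam ε (1 + a - t) * (p.1.1 : ℝ) * (p.2.1 : ℝ) *
            (lhat lam ε p.1.1 (1 + a - t) / eF L lam ε (1 + a - t)) *
            ((if p.1.1 = p.2.1 then (1 : ℝ) else 0)
              - lhat lam ε p.2.1 (1 + a - t) / eF L lam ε (1 + a - t))
        - (-(xF L lam ε (1 + a - t)) *
          (((p.2.1 : ℝ) * lhat lam ε p.2.1 (1 + a - t) / eF L lam ε (1 + a - t) ^ 2) *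
              ∑ u ∈ L, g p.1.1 u (1 + a - t)
            + ((p.1.1 : ℝ) * lhat lam ε p.1.1 (1 + a - t) / eF L lam ε (1 + a - t) ^ 2) *
              ∑ u ∈ L, g p.2.1 u (1 + a - t)
            - (((p.1.1 : ℝ) + (p.2.1 : ℝ)) / eF L lam ε (1 + a - t)) * g p.1.1 p.2.1 (1 + a - t))
        - xF L lam ε (1 + a - t) * (p.1.1 : ℝ) * (p.2.1 : ℝ) *
            (lhat lam ε p.1.1 (1 + a - t) / eF L lam ε (1 + a - t)) *
            ((if p.1.1 = p.2.1 then (1 : ℝ) else 0)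
              - lhat lam ε p.2.1 (1 + a - t) / eF L lam ε (1 + a - t)))) * (-1) := by
      rw [hF']
      simp only
      rw [Finset.sum_sub_distrib, Finset.sum_sub_distrib]
      ring
    rw [hval]
    exact hcomp
  have hcont : ContinuousOn F (Set.Icc a 1) := fun t ht => (hD t ht).continuousWithinAt
  have hderiv' : ∀ t ∈ Set.Ico a 1, HasDerivWithinAt F (F' t) (Set.Ici t) t := by
    intro t ht
    exact (hD t (Set.Ico_subset_Icc_self ht)).mono_of_mem_nhdsWithin (Icc_mem_nhdsGE_of_mem ht)
  have hFa : ‖F a‖ ≤ 0 := by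
    have : F a = 0 := by
      funext p
      have h1 := hf.2 p.1.1 p.1.2 p.2.1 p.2.2
      have h2 := hg.2 p.1.1 p.1.2 p.2.1 p.2.2
      simp only [hF, show (1 : ℝ) + a - a = 1 by ring, h1, h2, sub_self, Pi.zero_apply]
    rw [this, norm_zero]
  have hbound : ∀ t ∈ Set.Ico a 1, ‖F' t‖ ≤ K * ‖F t‖ + 0 := by
    intro t ht
    rw [add_zero]
    have hN : 0 ≤ ‖F t‖ := norm_nonneg _
    have hyIcc : (1 + a - t) ∈ Set.Icc a 1 := hmaps ⟨ht.1, le_of_lt ht.2⟩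
    set y : ℝ := 1 + a - t with hy
    have hy0 : 0 < y := lt_of_lt_of_le ha0 hyIcc.1
    have hE : 0 < ee L lam ε y := ee_pos hL hlamPos hε hy0
    have hefe : eF L lam ε y = ee L lam ε y := eF_eq hL2 y
    have hxfe : xF L lam ε y = ee L lam ε y / y := xF_eq hL2 (ne_of_gt hy0)
    have hlh : ∀ u ∈ L, 0 ≤ lhat lam ε u y ∧ lhat lam ε u y ≤ ee L lam ε y := by
      intro u hu
      constructor
      · exact le_of_lt (mul_pos (mul_pos hε (hlamPos u hu)) (pow_pos hy0 u))
      · exact Finset.single_le_sum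
          (f := fun v => ε * lam v * y ^ v)
          (fun v hv => le_of_lt (mul_pos (mul_pos hε (hlamPos v hv)) (pow_pos hy0 v))) hu
    have hsum : ∀ u ∈ L, ∀ v ∈ L,
        |∑ w ∈ L, (f u w y - g u w y)| ≤ (L.card : ℝ) * ‖F t‖ := by
      intro u hu v hv
      calc |∑ w ∈ L, (f u w y - g u w y)| ≤ ∑ w ∈ L, |f u w y - g u w y| :=
            Finset.abs_sum_le_sum_abs _ _
        _ ≤ ∑ _w ∈ L.attach, ‖F t‖ := by
            rw [← Finset.sum_attach L fun w => |f u w y - g u w y|]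
            refine Finset.sum_le_sum fun w _ => ?_
            exact norm_le_pi_norm (F t) (⟨u, hu⟩, w)
        _ = (L.card : ℝ) * ‖F t‖ := by
            rw [Finset.sum_const, Finset.card_attach, nsmul_eq_mul]
    refine (pi_norm_le_iff_of_nonneg (by positivity)).2 fun p => ?_
    obtain ⟨⟨k', hk'⟩, ⟨s', hs'⟩⟩ := p
    have hent : |f k' s' y - g k' s' y| ≤ ‖F t‖ := norm_le_pi_norm (F t) (⟨k', hk'⟩, ⟨s', hs'⟩)
    show ‖F' t (⟨k', hk'⟩, ⟨s', hs'⟩)‖ ≤ K * ‖F t‖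
    rw [hF']
    simp only [Real.norm_eq_abs]
    rw [← hy, hxfe, hefe]
    have hk'le := hle k' hk'
    have hs'le := hle s' hs'
    have h1 := (hlh k' hk').1
    have h2 := (hlh k' hk').2
    have h3 := (hlh s' hs').1
    have h4 := (hlh s' hs').2
    have hS1 := hsum k' hk' s' hs'
    have hS2 := hsum s' hs' k' hk'
    have hk'0 : (0:ℝ) ≤ (k' : ℝ) := Nat.cast_nonneg _
    have hs'0 : (0:ℝ) ≤ (s' : ℝ) := Nat.cast_nonneg _
    have hEY : (0:ℝ) < ee L lam ε y / y := by positivity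
    rw [abs_mul, abs_of_pos hEY]
    have hinner : |(s' : ℝ) * lhat lam ε s' y / ee L lam ε y ^ 2 * ∑ u ∈ L, (f k' u y - g k' u y)
          + (k' : ℝ) * lhat lam ε k' y / ee L lam ε y ^ 2 * ∑ u ∈ L, (f s' u y - g s' u y)
          - ((k' : ℝ) + (s' : ℝ)) / ee L lam ε y * (f k' s' y - g k' s' y)|
        ≤ (s' : ℝ) * lhat lam ε s' y / ee L lam ε y ^ 2 * ((L.card : ℝ) * ‖F t‖)
          + (k' : ℝ) * lhat lam ε k' y / ee L lam ε y ^ 2 * ((L.card : ℝ) * ‖F t‖)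
          + ((k' : ℝ) + (s' : ℝ)) / ee L lam ε y * ‖F t‖ := by
      refine ((abs_sub _ _).trans (add_le_add_left (abs_add_le _ _) _)).trans ?_
      gcongr ?_ + ?_ + ?_
      · rw [abs_mul]
        exact mul_le_mul (by rw [abs_of_nonneg (by positivity)]) hS1 (abs_nonneg _)
          (by positivity)
      · rw [abs_mul]
        exact mul_le_mul (by rw [abs_of_nonneg (by positivity)]) hS2 (abs_nonneg _)
          (by positivity)
      · rw [abs_mul]
        exact mul_le_mul (by rw [abs_of_nonneg (by positivity)]) hent (abs_nonneg _)
          (by positivity)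
    refine (mul_le_mul_of_nonneg_left hinner (le_of_lt hEY)).trans ?_
    have hE' : ee L lam ε y ≠ 0 := ne_of_gt hE
    have hy' : y ≠ 0 := ne_of_gt hy0
    have hkey : ee L lam ε y / y *
        ((s' : ℝ) * lhat lam ε s' y / ee L lam ε y ^ 2 * ((L.card : ℝ) * ‖F t‖)
          + (k' : ℝ) * lhat lam ε k' y / ee L lam ε y ^ 2 * ((L.card : ℝ) * ‖F t‖)
          + ((k' : ℝ) + (s' : ℝ)) / ee L lam ε y * ‖F t‖)
        = ((s' : ℝ) * lhat lam ε s' y / ee L lam ε y * ((L.card : ℝ) * ‖F t‖)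
            + (k' : ℝ) * lhat lam ε k' y / ee L lam ε y * ((L.card : ℝ) * ‖F t‖)
            + ((k' : ℝ) + (s' : ℝ)) * ‖F t‖) / y := by
      field_simp
    rw [hkey]
    have hc0 : (0:ℝ) ≤ (L.card : ℝ) * ‖F t‖ := by positivity
    have h5 : (s' : ℝ) * lhat lam ε s' y / ee L lam ε y ≤ Dm := by
      rw [div_le_iff₀ hE]
      exact mul_le_mul hs'le h4 h3 hDm0
    have h6 : (k' : ℝ) * lhat lam ε k' y / ee L lam ε y ≤ Dm := by
      rw [div_le_iff₀ hE]
      exact mul_le_mul hk'le h2 h1 hDm0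
    have hnum : (s' : ℝ) * lhat lam ε s' y / ee L lam ε y * ((L.card : ℝ) * ‖F t‖)
          + (k' : ℝ) * lhat lam ε k' y / ee L lam ε y * ((L.card : ℝ) * ‖F t‖)
          + ((k' : ℝ) + (s' : ℝ)) * ‖F t‖
        ≤ Dm * ((L.card : ℝ) * ‖F t‖) + Dm * ((L.card : ℝ) * ‖F t‖) + (Dm + Dm) * ‖F t‖ := by
      refine add_le_add (add_le_add ?_ ?_) ?_
      · exact mul_le_mul_of_nonneg_right h5 hc0
      · exact mul_le_mul_of_nonneg_right h6 hc0
      · exact mul_le_mul_of_nonneg_right (add_le_add hk'le hs'le) hN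
    have hnum0 : (0:ℝ) ≤ Dm * ((L.card : ℝ) * ‖F t‖) + Dm * ((L.card : ℝ) * ‖F t‖)
        + (Dm + Dm) * ‖F t‖ := by positivity
    calc _ ≤ (Dm * ((L.card : ℝ) * ‖F t‖) + Dm * ((L.card : ℝ) * ‖F t‖)
            + (Dm + Dm) * ‖F t‖) / y := by
          exact (div_le_div_iff_of_pos_right hy0).2 hnum
      _ ≤ (Dm * ((L.card : ℝ) * ‖F t‖) + Dm * ((L.card : ℝ) * ‖F t‖)
            + (Dm + Dm) * ‖F t‖) / a := by
          exact div_le_div_of_nonneg_left hnum0 ha0 hyIcc.1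
      _ = K * ‖F t‖ := by
          rw [hK]
          field_simp
          ring
  have hfin := norm_le_gronwallBound_of_norm_deriv_right_le hcont hderiv' hFa hbound 1
    ⟨ha1, le_refl 1⟩
  rw [gronwallBound_ε0_δ0] at hfin
  have hcomp : |F 1 (⟨k, hk⟩, ⟨s, hs⟩)| ≤ ‖F 1‖ := norm_le_pi_norm (F 1) _
  have hz : F 1 (⟨k, hk⟩, ⟨s, hs⟩) = 0 :=
    abs_eq_zero.1 (le_antisymm (le_trans hcomp hfin) (abs_nonneg _))
  simpa [hF, show (1:ℝ) + a - 1 = a by ring, sub_eq_zero] using hz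

lemma CEvv_dbar {L : Finset ℕ} {lam : ℕ → ℝ} {ε : ℝ}
    (hL : L.Nonempty) (hL2 : ∀ k ∈ L, 2 ≤ k)
    (hlamPos : ∀ t ∈ L, 0 < lam t) (hε : 0 < ε) :
    CEvv L lam ε (dbar L lam ε) := by
  constructor
  · intro k hk s hs y hy
    exact (dbar_deriv hL hL2 hlamPos hε hk hs hy.1).hasDerivWithinAt
  · intro k hk s hs
    exact dbar_one k s

theorem statement_5
    (L R : Finset ℕ) (hL : L.Nonempty) (hR : R.Nonempty)
    (hL2 : ∀ k ∈ L, 2 ≤ k) (hR2 : ∀ k ∈ R, 2 ≤ k)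
    (lam rho : ℕ → ℝ)
    (hlamPos : ∀ k ∈ L, 0 < lam k) (hlamSum : ∑ k ∈ L, lam k = 1)
    (hrhoPos : ∀ k ∈ R, 0 < rho k) (hrhoSum : ∑ k ∈ R, rho k = 1)
    (ε : ℝ) (hε : ε ∈ Set.Ioo (0 : ℝ) 1)
    (δll : ℕ → ℕ → ℝ → ℝ) (hvv : CEvv L lam ε δll) :
    ∀ k ∈ L, ∀ s ∈ L, ∀ y ∈ Set.Ioc (0 : ℝ) 1,
      δll k k y / ((k : ℝ) * lhat lam ε k y) ^ 2 - δll s s y / ((s : ℝ) * lhat lam ε s y) ^ 2 =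
        -((ε * y ^ k - 1) / ((k : ℝ) * lhat lam ε k y))
        + (ε * y ^ s - 1) / ((s : ℝ) * lhat lam ε s y)
        + (2 * ε / eF L lam ε y) * ((y ^ k - 1) / (k : ℝ) - (y ^ s - 1) / (s : ℝ)) := by
  intro k hk s hs y hy
  have hε0 : 0 < ε := hε.1
  have huniq := CEvv_unique hL hL2 hlamPos hε0 hvv (CEvv_dbar hL hL2 hlamPos hε0)
  rw [huniq k hk k hk y hy, huniq s hs s hs y hy, eF_eq hL2]
  have hy0 : 0 < y := hy.1
  have hk0 : (k:ℝ) ≠ 0 := Nat.cast_ne_zero.2 (by have := hL2 k hk; omega)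
  have hs0 : (s:ℝ) ≠ 0 := Nat.cast_ne_zero.2 (by have := hL2 s hs; omega)
  have hlamk : lam k ≠ 0 := ne_of_gt (hlamPos k hk)
  have hlams : lam s ≠ 0 := ne_of_gt (hlamPos s hs)
  have hE : ee L lam ε y ≠ 0 := ne_of_gt (ee_pos hL hlamPos hε0 hy0)
  have hy' : y ≠ 0 := ne_of_gt hy0
  have hεne : ε ≠ 0 := ne_of_gt hε0
  simp only [dbar, if_pos rfl, lhat, mm, GG, ↓reduceIte]
  field_simp
  ring


end LDPC
end

section
/- Under the variable–variable and variable–check blocks of covariance evolution with their initial conditions, for all y ∈ (0,1] the quantity A^{(l_Σ,r_{d_c})} := Σ_{k∈L} (1/k) δ^{l_k,r_{d_c}}, where δ^{l_k,r_{d_c}} := δ^{l_k,l_Σ} − Σ_{j∈R̄} δ^{l_k,r_j}, satisfies A^{(l_Σ,r_{d_c})} = ε ε̃ Σ_{i∈L} (λ_i/i)(y^i − 1) · (x'/x) G_{d_c} − ε̃ x G_{d_c}, where G_{d_c} := −d_c r̂_{d_c}/x. (Identity used as the induction basis in the proof of Lemma 2.) -/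
open Finset

namespace LDPC

open Set in
lemma linear_ODE_unique {ι : Type*} [Fintype ι] {a b : ℝ}
    (c : ℝ → ι → ι → ℝ) (hc : ∀ i j, ContinuousOn (fun t => c t i j) (Set.Icc a b))
    (f : ℝ → ι → ℝ)
    (hf : ∀ t ∈ Set.Icc a b, HasDerivWithinAt f
      (fun i => ∑ j, c t i j * f t j) (Set.Icc a b) t)
    (hb : f b = 0) : ∀ t ∈ Set.Icc a b, f t = 0 := by
  rcases le_or_gt b a with hab | hab
  · rcases eq_or_lt_of_le hab with rfl | h
    · intro t ht; have : t = b := le_antisymm ht.2 ht.1; rw [this, hb]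
    · intro t ht; exact absurd (ht.1.trans ht.2) (not_le.mpr h)
  -- bound on coefficients
  have hcont : ContinuousOn (fun t => (fun p : ι × ι => c t p.1 p.2)) (Set.Icc a b) := by
    apply continuousOn_pi.2
    intro p; exact hc p.1 p.2
  obtain ⟨C, hC⟩ := (isCompact_Icc).exists_bound_of_continuousOn hcont
  set M : ℝ := (Fintype.card ι : ℝ) * max C 0 with hM
  have hM0 : 0 ≤ M := by positivity
  set K : NNReal := ⟨M, hM0⟩ with hK
  set v : ℝ → (ι → ℝ) → (ι → ℝ) :=
    fun t z => if t ∈ Set.Icc a b then (fun i => ∑ j, c t i j * z j) else 0 with hv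
  have hlip : ∀ t, LipschitzWith K (v t) := by
    intro t
    by_cases ht : t ∈ Set.Icc a b
    · apply LipschitzWith.of_dist_le_mul
      intro z w
      simp only [hv, if_pos ht]
      rcases isEmpty_or_nonempty ι with hι | hι
      · simp [dist_pi_def]
      rw [dist_pi_le_iff (by positivity)]
      intro i
      rw [Real.dist_eq]
      have : (∑ j, c t i j * z j) - (∑ j, c t i j * w j) = ∑ j, c t i j * (z j - w j) := by
        rw [← Finset.sum_sub_distrib]; congr 1; ext j; ring
      rw [this]
      calc |∑ j, c t i j * (z j - w j)| ≤ ∑ j, |c t i j * (z j - w j)| :=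
            Finset.abs_sum_le_sum_abs _ _
        _ ≤ ∑ _j : ι, max C 0 * dist z w := by
            apply Finset.sum_le_sum
            intro j _
            rw [abs_mul]
            apply mul_le_mul
            · have h1 := norm_le_pi_norm (fun p : ι × ι => c t p.1 p.2) (i, j)
              have h2 := (hC t ht).trans (le_max_left C 0)
              simpa using h1.trans h2
            · rw [← Real.dist_eq]; exact dist_le_pi_dist z w j
            · exact abs_nonneg _
            · exact le_max_right _ _
        _ = (K : ℝ) * dist z w := by
            rw [Finset.sum_const, Finset.card_univ, nsmul_eq_mul, hK]
            change _ = M * dist z w; rw [hM]; ring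
    · simp only [hv, if_neg ht]
      exact (LipschitzWith.const 0).weaken (zero_le)
  have key : Set.EqOn f (fun _ => (0 : ι → ℝ)) (Set.Icc a b) := by
    apply ODE_solution_unique_of_mem_Icc_left (K := K) (v := v) (s := fun _ => Set.univ)
      (fun t _ => (hlip t).lipschitzOnWith)
    · exact fun t ht => (hf t ht).continuousWithinAt
    · intro t ht
      have ht' : t ∈ Set.Icc a b := ⟨le_of_lt ht.1, ht.2⟩
      have h1 : HasDerivWithinAt f (fun i => ∑ j, c t i j * f t j) (Set.Iic t) t := by
        apply (hf t ht').mono_of_mem_nhdsWithin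
        rw [mem_nhdsWithin]
        exact ⟨Set.Ioi a, isOpen_Ioi, ht.1, fun x hx => ⟨le_of_lt hx.1, hx.2.trans ht'.2⟩⟩
      have hveq : v t (f t) = fun i => ∑ j, c t i j * f t j := by
        show (if t ∈ Set.Icc a b then (fun i => ∑ j, c t i j * f t j) else 0) = _
        rw [if_pos ht']
      rw [hveq]; exact h1
    · intro t _; exact Set.mem_univ _
    · exact continuousOn_const
    · intro t ht
      have ht' : t ∈ Set.Icc a b := ⟨le_of_lt ht.1, ht.2⟩
      have h0 : HasDerivWithinAt (fun _ : ℝ => (0 : ι → ℝ)) 0 (Set.Iic t) t :=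
        hasDerivWithinAt_const _ _ _
      refine h0.congr_deriv (Eq.symm ?_)
      show (if t ∈ Set.Icc a b then (fun i => ∑ j, c t i j * (0 : ι → ℝ) j) else 0) = 0
      rw [if_pos ht']
      funext i
      simp
    · intro t _; exact Set.mem_univ _
    · exact hb
  exact fun t ht => key ht

lemma telescope_aux (g : ℕ → ℝ) (n : ℕ) :
    ∑ j ∈ Finset.Icc 1 n, (j : ℝ) * (g (j + 1) - g j)
      = n * g (n + 1) - ∑ j ∈ Finset.Icc 1 n, g j := by
  induction n with
  | zero => simp
  | succ n ih =>
    rw [Finset.sum_Icc_succ_top (by omega), Finset.sum_Icc_succ_top (by omega), ih]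
    push_cast
    ring

section Aux

variable {L R : Finset ℕ} {lam rho : ℕ → ℝ} {ε : ℝ}

/-- Σ_{k∈L} λ_k y^k -/
noncomputable def Pm0 (L : Finset ℕ) (lam : ℕ → ℝ) (y : ℝ) : ℝ := ∑ k ∈ L, lam k * y ^ k
/-- Σ_{k∈L} (λ_k/k)(y^k - 1) -/
noncomputable def PPhi (L : Finset ℕ) (lam : ℕ → ℝ) (y : ℝ) : ℝ :=
  ∑ k ∈ L, lam k / (k : ℝ) * (y ^ k - 1)
/-- candidate for Σ_s (1/s) δll k s -/
noncomputable def Pbeta (L : Finset ℕ) (lam : ℕ → ℝ) (ε : ℝ) (k : ℕ) (y : ℝ) : ℝ :=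
  ε * (1 - ε) * lam k * y ^ k * (1 - k * PPhi L lam y / Pm0 L lam y)

lemma lamP_pos (hL : L.Nonempty) (hpos : ∀ k ∈ L, 0 < lam k) {y : ℝ} (hy : 0 < y) :
    0 < lamP L lam y := by
  exact Finset.sum_pos (fun k hk => mul_pos (hpos k hk) (pow_pos hy _)) hL

lemma Pm0_eq (hL2 : ∀ k ∈ L, 2 ≤ k) (y : ℝ) : Pm0 L lam y = y * lamP L lam y := by
  rw [lamP, Finset.mul_sum, Pm0]
  apply Finset.sum_congr rfl
  intro k hk
  have h1 : k - 1 + 1 = k := by have := hL2 k hk; omega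
  have e1 : y ^ k = y ^ (k - 1) * y := by rw [← pow_succ, h1]
  rw [e1]; ring

lemma Pm0_pos (hL : L.Nonempty) (hL2 : ∀ k ∈ L, 2 ≤ k) (hpos : ∀ k ∈ L, 0 < lam k)
    {y : ℝ} (hy : 0 < y) : 0 < Pm0 L lam y := by
  rw [Pm0_eq hL2]; exact mul_pos hy (lamP_pos hL hpos hy)

lemma sum_lhat (hL2 : ∀ k ∈ L, 2 ≤ k) (y : ℝ) :
    ∑ k ∈ L, lhat lam ε k y = eF L lam ε y := by
  rw [eF, xF, mul_comm (ε * lamP L lam y) y, ← mul_assoc, mul_comm y ε, mul_assoc,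
    ← Pm0_eq hL2, Pm0, Finset.mul_sum]
  apply Finset.sum_congr rfl
  intro k hk
  rw [lhat]; ring

lemma sum_klhat (hL2 : ∀ k ∈ L, 2 ≤ k) (y : ℝ) :
    ∑ k ∈ L, (k : ℝ) * lhat lam ε k y = eF L lam ε y + y ^ 2 * xD L lam ε y := by
  rw [← sum_lhat (ε := ε) hL2 y, xD, lamD, Finset.mul_sum, Finset.mul_sum, ← Finset.sum_add_distrib]
  apply Finset.sum_congr rfl
  intro k hk
  have h2 : k - 2 + 2 = k := by have := hL2 k hk; omega
  rw [lhat, ← h2, pow_add]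
  push_cast [show ((k - 2 : ℕ) : ℝ) = (k : ℝ) - 2 from by
    have := hL2 k hk; push_cast [Nat.cast_sub (by omega : 2 ≤ k)]; ring]
  ring

/-- Pm1 := Σ k λ_k y^k in atom form -/
lemma sum_kmono (hL2 : ∀ k ∈ L, 2 ≤ k) (y : ℝ) :
    ∑ k ∈ L, (k : ℝ) * (lam k * y ^ k)
      = y * lamP L lam y + y ^ 2 * lamD L lam y := by
  rw [lamP, lamD, Finset.mul_sum, Finset.mul_sum, ← Finset.sum_add_distrib]
  apply Finset.sum_congr rfl
  intro k hk
  have hk2 := hL2 k hk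
  have h1 : k - 1 + 1 = k := by omega
  have h2 : k - 2 + 2 = k := by omega
  have h12 : k - 2 + 1 = k - 1 := by omega
  have e1 : y ^ k = y ^ (k-1) * y := by rw [← pow_succ, h1]
  have e12 : y ^ (k-1) = y ^ (k-2) * y := by rw [← pow_succ, h12]
  rw [e1, e12]; ring

lemma sum_k2mono (hL2 : ∀ k ∈ L, 2 ≤ k) (y : ℝ) :
    ∑ k ∈ L, (k : ℝ) ^ 2 * (lam k * y ^ k)
      = y * lamP L lam y + 3 * y ^ 2 * lamD L lam y + y ^ 3 * lamDD L lam y := by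
  rw [lamP, lamD, lamDD, Finset.mul_sum, Finset.mul_sum, Finset.mul_sum,
    ← Finset.sum_add_distrib, ← Finset.sum_add_distrib]
  apply Finset.sum_congr rfl
  intro k hk
  have hk2 := hL2 k hk
  rcases eq_or_lt_of_le hk2 with h | h
  · subst h; norm_num; ring
  · have hk3 : 3 ≤ k := h
    have h1 : k - 1 + 1 = k := by omega
    have h2 : k - 2 + 2 = k := by omega
    have h3 : k - 3 + 3 = k := by omega
    have h12 : k - 2 + 1 = k - 1 := by omega
    have h23 : k - 3 + 1 = k - 2 := by omega
    have e1 : y ^ k = y ^ (k-1) * y := by rw [← pow_succ, h1]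
    have e12 : y ^ (k-1) = y ^ (k-2) * y := by rw [← pow_succ, h12]
    have e23 : y ^ (k-2) = y ^ (k-3) * y := by rw [← pow_succ, h23]
    rw [e1, e12, e23]; ring

lemma hasDerivAt_lamP (hL2 : ∀ k ∈ L, 2 ≤ k) (y : ℝ) :
    HasDerivAt (fun y => lamP L lam y) (lamD L lam y) y := by
  rw [lamD]
  apply HasDerivAt.fun_sum
  intro k hk
  have hk2 := hL2 k hk
  have h1 : k - 1 - 1 = k - 2 := by omega
  have hc : ((k - 1 : ℕ) : ℝ) = (k : ℝ) - 1 := by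
    push_cast [Nat.cast_sub (by omega : 1 ≤ k)]; ring
  have := (hasDerivAt_pow (k-1) y).const_mul (lam k)
  simpa [h1, hc, mul_comm, mul_assoc, mul_left_comm] using this

lemma hasDerivAt_lamD (hL2 : ∀ k ∈ L, 2 ≤ k) (y : ℝ) :
    HasDerivAt (fun y => lamD L lam y) (lamDD L lam y) y := by
  rw [lamDD]
  apply HasDerivAt.fun_sum
  intro k hk
  have hk2 := hL2 k hk
  have h1 : k - 2 - 1 = k - 3 := by omega
  have hc : ((k - 2 : ℕ) : ℝ) = (k : ℝ) - 2 := by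
    push_cast [Nat.cast_sub (by omega : 2 ≤ k)]; ring
  have := (hasDerivAt_pow (k-2) y).const_mul (((k:ℝ) - 1) * lam k)
  simpa [h1, hc, mul_comm, mul_assoc, mul_left_comm] using this

lemma hasDerivAt_Pm0 (hL2 : ∀ k ∈ L, 2 ≤ k) (y : ℝ) :
    HasDerivAt (fun y => Pm0 L lam y) (lamP L lam y + y * lamD L lam y) y := by
  have h : ∀ k ∈ L, HasDerivAt (fun y : ℝ => lam k * y ^ k)
      (lam k * y ^ (k-1) + y * (((k:ℝ) - 1) * lam k * y ^ (k-2))) y := by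
    intro k hk
    have hk2 := hL2 k hk
    have h1 : k - 1 + 1 = k := by omega
    have h2 : k - 2 + 1 = k - 1 := by omega
    have hc : ((k : ℕ) : ℝ) = 1 + ((k:ℝ) - 1) := by ring
    have := (hasDerivAt_pow k y).const_mul (lam k)
    refine this.congr_deriv ?_
    have e2 : y ^ (k-1) = y ^ (k-2) * y := by rw [← pow_succ, h2]
    rw [hc, e2]
    ring
  have := HasDerivAt.fun_sum (u := L) (fun k hk => h k hk)
  rw [lamP, lamD]
  simpa [Finset.sum_add_distrib, Finset.mul_sum, Pm0] using this

lemma hasDerivAt_PPhi (hL2 : ∀ k ∈ L, 2 ≤ k) (y : ℝ) :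
    HasDerivAt (fun y => PPhi L lam y) (lamP L lam y) y := by
  rw [lamP]
  apply HasDerivAt.fun_sum
  intro k hk
  have hk2 := hL2 k hk
  have hk0 : (k : ℝ) ≠ 0 := by positivity
  have := ((hasDerivAt_pow k y).sub_const 1).const_mul (lam k / k)
  refine this.congr_deriv ?_
  have h1 : k - 1 + 1 = k := by omega
  field_simp

lemma hasDerivAt_xF (hL2 : ∀ k ∈ L, 2 ≤ k) (y : ℝ) :
    HasDerivAt (fun y => xF L lam ε y) (xD L lam ε y) y := by
  rw [xD]
  exact (hasDerivAt_lamP hL2 y).const_mul ε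

lemma hasDerivAt_xD (hL2 : ∀ k ∈ L, 2 ≤ k) (y : ℝ) :
    HasDerivAt (fun y => xD L lam ε y) (xDD L lam ε y) y := by
  rw [xDD]
  exact (hasDerivAt_lamD hL2 y).const_mul ε


section Rside

variable {dc : ℕ}
variable (hR2 : ∀ k ∈ R, 2 ≤ k) (hdcR : dc ∈ R) (hdcMax : ∀ i ∈ R, i ≤ dc)

include hR2 hdcR hdcMax in
lemma rhat_dc_eq (y : ℝ) :
    rhat L R lam rho ε dc y = rho dc * xF L lam ε y ^ dc := by
  have hdc2 : 2 ≤ dc := hR2 dc hdcR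
  rw [rhat, if_neg (by omega)]
  rw [Finset.sum_eq_single dc]
  · simp
  · intro i hi hne
    have : i - 1 < dc - 1 := by
      have h1 := hdcMax i hi
      have h2 := hR2 i hi
      omega
    rw [Nat.choose_eq_zero_of_lt this]
    simp
  · intro h; exact absurd hdcR h

include hR2 hdcMax in
lemma brhat_sum (hrhoSum : ∑ k ∈ R, rho k = 1) (y : ℝ) :
    ∑ j ∈ Finset.Icc 1 dc, ∑ i ∈ R, rho i * ((i - 1).choose (j - 1) : ℝ) *
      xF L lam ε y ^ j * (1 - xF L lam ε y) ^ (i - j) = xF L lam ε y := by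
  set x := xF L lam ε y with hx
  rw [Finset.sum_comm]
  have inner : ∀ i ∈ R, ∑ j ∈ Finset.Icc 1 dc,
      rho i * ((i - 1).choose (j - 1) : ℝ) * x ^ j * (1 - x) ^ (i - j) = rho i * x := by
    intro i hi
    have hi2 := hR2 i hi
    have hidc := hdcMax i hi
    have key : ∑ t ∈ Finset.range i, x ^ t * (1 - x) ^ ((i-1) - t) * ((i-1).choose t : ℝ) = 1 := by
      have hpow := (add_pow x (1 - x) (i - 1)).symm
      rw [show x + (1 - x) = (1:ℝ) by ring, one_pow] at hpow
      rw [show i = i - 1 + 1 by omega]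
      exact hpow
    calc ∑ j ∈ Finset.Icc 1 dc, rho i * ((i - 1).choose (j - 1) : ℝ) * x ^ j * (1 - x) ^ (i - j)
        = ∑ t ∈ Finset.range dc,
            rho i * x * (x ^ t * (1 - x) ^ ((i-1) - t) * ((i-1).choose t : ℝ)) := by
          rw [← Finset.Ico_add_one_right_eq_Icc, Finset.sum_Ico_eq_sum_range, show dc + 1 - 1 = dc by omega]
          apply Finset.sum_congr rfl
          intro t _
          rw [show 1 + t - 1 = t by omega, show i - (1 + t) = (i-1) - t by omega,
            show 1 + t = t + 1 by omega, pow_succ]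
          ring
      _ = ∑ t ∈ Finset.range i,
            rho i * x * (x ^ t * (1 - x) ^ ((i-1) - t) * ((i-1).choose t : ℝ)) := by
          apply (Finset.sum_subset (Finset.range_subset_range.mpr hidc) _).symm
          intro t _ ht
          rw [Nat.choose_eq_zero_of_lt (by simp at ht; omega)]
          simp
      _ = rho i * x := by
          rw [← Finset.mul_sum, key, mul_one]
  rw [Finset.sum_congr rfl inner, ← Finset.sum_mul, hrhoSum, one_mul]

include hR2 hdcR hdcMax in
lemma sum_rhat_eq (hrhoSum : ∑ k ∈ R, rho k = 1) (y : ℝ) :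
    ∑ j ∈ Finset.Icc 1 dc, rhat L R lam rho ε j y = xF L lam ε y * y := by
  have hdc2 : 2 ≤ dc := hR2 dc hdcR
  set x := xF L lam ε y with hx
  have h1mem : 1 ∈ Finset.Icc 1 dc := by simp; omega
  have hsplit := Finset.add_sum_erase _ (fun j => rhat L R lam rho ε j y) h1mem
  have hbr := brhat_sum (L := L) (lam := lam) (ε := ε) hR2 hdcMax hrhoSum y
  have hsplit2 := Finset.add_sum_erase _ (fun j => ∑ i ∈ R, rho i * ((i - 1).choose (j - 1) : ℝ) *
      x ^ j * (1 - x) ^ (i - j)) h1mem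
  have hbr1 : ∑ i ∈ R, rho i * ((i - 1).choose (1 - 1) : ℝ) * x ^ 1 * (1 - x) ^ (i - 1)
      = x * rhoP R rho (1 - x) := by
    rw [rhoP, Finset.mul_sum]
    apply Finset.sum_congr rfl
    intro i hi
    simp
    ring
  have herase : ∀ j ∈ (Finset.Icc 1 dc).erase 1, rhat L R lam rho ε j y
      = ∑ i ∈ R, rho i * ((i - 1).choose (j - 1) : ℝ) * x ^ j * (1 - x) ^ (i - j) := by
    intro j hj
    have : j ≠ 1 := (Finset.mem_erase.mp hj).1
    rw [rhat, if_neg this]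
  have hr1 : rhat L R lam rho ε 1 y = x * (y - 1 + rhoP R rho (1 - x)) := by
    rw [rhat, if_pos rfl]
  calc ∑ j ∈ Finset.Icc 1 dc, rhat L R lam rho ε j y
      = rhat L R lam rho ε 1 y + ∑ j ∈ (Finset.Icc 1 dc).erase 1, rhat L R lam rho ε j y :=
        hsplit.symm
    _ = x * (y - 1 + rhoP R rho (1 - x)) + (x - x * rhoP R rho (1 - x)) := by
        rw [hr1, Finset.sum_congr rfl herase]
        congr 1
        have := hsplit2
        rw [hbr] at this
        rw [← hbr1]
        linarith [this]
    _ = x * y := by ring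

include hR2 hdcR hdcMax in
lemma sum_G_eq (hrhoSum : ∑ k ∈ R, rho k = 1) {y : ℝ} (hxne : xF L lam ε y ≠ 0) :
    ∑ j ∈ Finset.Icc 1 (dc - 1), Gf L R lam rho ε dc j y
      = -Gf L R lam rho ε dc dc y - y := by
  have hdc2 : 2 ≤ dc := hR2 dc hdcR
  set x := xF L lam ε y with hx
  have hGj : ∀ j ∈ Finset.Icc 1 (dc - 1), Gf L R lam rho ε dc j y
      = (j : ℝ) * (rhat L R lam rho ε (j+1) y - rhat L R lam rho ε j y) / x := by
    intro j hj
    simp only [Finset.mem_Icc] at hj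
    rw [Gf, if_neg (by omega)]
  rw [Finset.sum_congr rfl hGj]
  have htel := telescope_aux (fun j => rhat L R lam rho ε j y) (dc - 1)
  have hsr := sum_rhat_eq (L := L) (lam := lam) (ε := ε) hR2 hdcR hdcMax hrhoSum y
  rw [show dc = dc - 1 + 1 by omega, Finset.sum_Icc_succ_top (by omega),
    show dc - 1 + 1 = dc by omega] at hsr
  have hsum : ∑ j ∈ Finset.Icc 1 (dc - 1), rhat L R lam rho ε j y
      = x * y - rhat L R lam rho ε dc y := by linarith
  have hd1 : dc - 1 + 1 = dc := by omega
  rw [hd1] at htel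
  rw [Gf, if_pos rfl, ← hx]
  rw [← Finset.sum_div, htel, hsum]
  have hcast : ((dc - 1 : ℕ) : ℝ) = (dc : ℝ) - 1 := by
    push_cast [Nat.cast_sub (by omega : 1 ≤ dc)]; ring
  rw [hcast]
  field_simp
  ring

end Rside

section Candidates

/-- derivative of Pbeta -/
noncomputable def Pbd (L : Finset ℕ) (lam : ℕ → ℝ) (ε : ℝ) (k : ℕ) (y : ℝ) : ℝ :=
  ε * (1 - ε) * lam k * ((k:ℝ) * y ^ (k-1) * (1 - (k:ℝ) * PPhi L lam y / Pm0 L lam y)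
    + y ^ k * (-(((k:ℝ) * lamP L lam y) * Pm0 L lam y
        - ((k:ℝ) * PPhi L lam y) * (lamP L lam y + y * lamD L lam y)) / Pm0 L lam y ^ 2))

lemma hasDerivAt_Pbeta (hL2 : ∀ k ∈ L, 2 ≤ k) (k : ℕ) {y : ℝ} (hm0 : Pm0 L lam y ≠ 0) :
    HasDerivAt (fun y => Pbeta L lam ε k y) (Pbd L lam ε k y) y := by
  have hQ := (((hasDerivAt_PPhi (lam := lam) hL2 y).const_mul (k:ℝ)).fun_div
    (hasDerivAt_Pm0 (lam := lam) hL2 y) hm0)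
  have hOne := hQ.const_sub 1
  have hprod := (hasDerivAt_pow k y).fun_mul hOne
  have final := hprod.const_mul (ε * (1-ε) * lam k)
  have heq : (fun y => ε * (1-ε) * lam k * (y ^ k * (1 - (k:ℝ) * PPhi L lam y / Pm0 L lam y)))
      = fun y => Pbeta L lam ε k y := by
    funext z; rw [Pbeta]; ring
  rw [heq] at final
  refine final.congr_deriv ?_
  rw [Pbd]
  ring

lemma sum_Pbeta (hL2 : ∀ k ∈ L, 2 ≤ k) (y : ℝ) (hm0 : Pm0 L lam y ≠ 0) :
    ∑ t ∈ L, Pbeta L lam ε t y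
      = ε * (1 - ε) * (Pm0 L lam y
          - PPhi L lam y * (y * lamP L lam y + y^2 * lamD L lam y) / Pm0 L lam y) := by
  have h1 : ∀ t ∈ L, Pbeta L lam ε t y
      = ε*(1-ε) * (lam t * y^t)
        - (ε*(1-ε) * PPhi L lam y / Pm0 L lam y) * ((t:ℝ) * (lam t * y^t)) := by
    intro t ht; rw [Pbeta]; field_simp
  rw [Finset.sum_congr rfl h1, Finset.sum_sub_distrib, ← Finset.mul_sum, ← Finset.mul_sum,
    show (∑ t ∈ L, lam t * y^t) = Pm0 L lam y from rfl, sum_kmono hL2]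
  field_simp

lemma sum_PbetaW (hL2 : ∀ k ∈ L, 2 ≤ k) (y : ℝ) (hm0 : Pm0 L lam y ≠ 0) :
    ∑ t ∈ L, ((t:ℝ) - 1) * Pbeta L lam ε t y
      = ε * (1 - ε) * ((y * lamP L lam y + y^2 * lamD L lam y) - Pm0 L lam y
          - PPhi L lam y * (2 * y^2 * lamD L lam y + y^3 * lamDD L lam y) / Pm0 L lam y) := by
  have h1 : ∀ t ∈ L, ((t:ℝ) - 1) * Pbeta L lam ε t y
      = (ε*(1-ε) * ((t:ℝ) * (lam t * y^t)) - ε*(1-ε) * (lam t * y^t))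
        - ((ε*(1-ε) * PPhi L lam y / Pm0 L lam y) * ((t:ℝ)^2 * (lam t * y^t))
          - (ε*(1-ε) * PPhi L lam y / Pm0 L lam y) * ((t:ℝ) * (lam t * y^t))) := by
    intro t ht; rw [Pbeta]; field_simp
  rw [Finset.sum_congr rfl h1, Finset.sum_sub_distrib, Finset.sum_sub_distrib,
    Finset.sum_sub_distrib, ← Finset.mul_sum, ← Finset.mul_sum, ← Finset.mul_sum,
    ← Finset.mul_sum, show (∑ t ∈ L, lam t * y^t) = Pm0 L lam y from rfl,
    sum_kmono hL2, sum_k2mono hL2]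
  field_simp
  ring

lemma Pbeta_ode (hL2 : ∀ k ∈ L, 2 ≤ k) {y : ℝ} (hy0 : 0 < y)
    (hn0 : 0 < lamP L lam y) (hε0 : ε ≠ 0) {k : ℕ} (hk : k ∈ L) :
    Pbd L lam ε k y = (k:ℝ)/y * Pbeta L lam ε k y
      - ((k:ℝ) * lhat lam ε k y / (eF L lam ε y * y)) * ∑ t ∈ L, Pbeta L lam ε t y := by
  have hm0 : Pm0 L lam y ≠ 0 := by rw [Pm0_eq hL2]; positivity
  have e1 : y ^ k = y ^ (k-1) * y := by
    rw [← pow_succ, show k - 1 + 1 = k from by have := hL2 k hk; omega]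
  rw [sum_Pbeta hL2 y hm0, Pbd, Pbeta, lhat, eF, xF, Pm0_eq hL2, e1]
  have hyne := hy0.ne'
  have hn0ne := hn0.ne'
  field_simp
  ring

/-- candidate closed form for A -/
noncomputable def Ahat (L : Finset ℕ) (lam rho : ℕ → ℝ) (ε : ℝ) (dc : ℕ) (y : ℝ) : ℝ :=
  (dc:ℝ) * rho dc * xF L lam ε y ^ (dc - 2) *
    ((1-ε) * xF L lam ε y ^ 2 - ε * (1-ε) * PPhi L lam y * xD L lam ε y)

noncomputable def Ahd (L : Finset ℕ) (lam rho : ℕ → ℝ) (ε : ℝ) (dc : ℕ) (y : ℝ) : ℝ :=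
  (dc:ℝ) * rho dc * ( ((dc:ℝ)-2) * xF L lam ε y ^ (dc-2-1) * xD L lam ε y *
      ((1-ε) * xF L lam ε y ^ 2 - ε * (1-ε) * PPhi L lam y * xD L lam ε y)
    + xF L lam ε y ^ (dc-2) * ((1-ε) * (2 * xF L lam ε y * xD L lam ε y)
        - ε * (1-ε) * (lamP L lam y * xD L lam ε y + PPhi L lam y * xDD L lam ε y)) )

lemma hasDerivAt_Ahat (hL2 : ∀ k ∈ L, 2 ≤ k) (hdc2 : 2 ≤ dc) (y : ℝ) :
    HasDerivAt (fun y => Ahat L lam rho ε dc y) (Ahd L lam rho ε dc y) y := by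
  have hx := hasDerivAt_xF (lam := lam) (ε := ε) hL2 y
  have hpowX := hx.fun_pow (dc-2)
  have hinner := (((hx.fun_pow 2)).const_mul (1-ε)).fun_sub
    (((hasDerivAt_PPhi (lam := lam) hL2 y).fun_mul (hasDerivAt_xD (lam := lam) (ε := ε) hL2 y)).const_mul
      (ε * (1-ε)))
  have hprod := hpowX.fun_mul hinner
  have final := hprod.const_mul ((dc:ℝ) * rho dc)
  have heq : (fun y => (dc:ℝ) * rho dc * (xF L lam ε y ^ (dc-2) *
      ((1-ε) * xF L lam ε y ^ 2 - ε * (1-ε) * (PPhi L lam y * xD L lam ε y))))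
      = fun y => Ahat L lam rho ε dc y := by
    funext z; rw [Ahat]; ring
  rw [heq] at final
  refine final.congr_deriv ?_
  rw [Ahd]
  have hcast : ((dc - 2 : ℕ) : ℝ) = (dc:ℝ) - 2 := by
    push_cast [Nat.cast_sub hdc2]; ring
  rw [hcast]
  simp only [show (2:ℕ)-1 = 1 from rfl, pow_one, Nat.cast_ofNat]
  ring

lemma Gf_dc_eq (hR2 : ∀ k ∈ R, 2 ≤ k) (hdcR : dc ∈ R) (hdcMax : ∀ i ∈ R, i ≤ dc) (y : ℝ) :
    Gf L R lam rho ε dc dc y = -((dc:ℝ) * (rho dc * xF L lam ε y ^ dc)) / xF L lam ε y := by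
  rw [Gf, if_pos rfl, rhat_dc_eq hR2 hdcR hdcMax]

lemma Ahat_ode (hL2 : ∀ k ∈ L, 2 ≤ k) (hR2 : ∀ k ∈ R, 2 ≤ k) (hdcR : dc ∈ R)
    (hdcMax : ∀ i ∈ R, i ≤ dc) {y : ℝ} (hy0 : 0 < y)
    (hn0 : 0 < lamP L lam y) (hε0 : ε ≠ 0) :
    Ahd L lam rho ε dc y = (dc:ℝ) * (xD L lam ε y / xF L lam ε y) * Ahat L lam rho ε dc y
      + 2 * (xD L lam ε y / eF L lam ε y) * Gf L R lam rho ε dc dc y *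
          (∑ t ∈ L, Pbeta L lam ε t y)
      - (Gf L R lam rho ε dc dc y / y^2) * (∑ t ∈ L, ((t:ℝ)-1) * Pbeta L lam ε t y) := by
  have hdc2 : 2 ≤ dc := hR2 dc hdcR
  have hm0 : Pm0 L lam y ≠ 0 := by rw [Pm0_eq hL2]; positivity
  have hxne : xF L lam ε y ≠ 0 := by rw [xF]; positivity
  rw [sum_Pbeta hL2 y hm0, sum_PbetaW hL2 y hm0, Gf_dc_eq hR2 hdcR hdcMax,
    Ahd, Ahat, Pm0_eq hL2, eF]
  simp only [xF, xD, xDD]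
  have hyne := hy0.ne'
  have hn0ne := hn0.ne'
  rcases eq_or_lt_of_le hdc2 with h2 | h3
  · subst h2
    norm_num
    field_simp
    ring
  · have hd3 : 3 ≤ dc := h3
    have e1 : (ε * lamP L lam y) ^ (dc - 2) = (ε * lamP L lam y) ^ (dc-2-1) * (ε * lamP L lam y) := by
      rw [← pow_succ, show dc - 2 - 1 + 1 = dc - 2 from by omega]
    have e2 : (ε * lamP L lam y) ^ dc = (ε * lamP L lam y) ^ (dc-2-1) * (ε * lamP L lam y) ^ 3 := by
      rw [← pow_add, show dc - 2 - 1 + 3 = dc from by omega]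
    rw [e1, e2]
    field_simp
    ring

end Candidates

section Cont

lemma continuous_lamP : Continuous fun y => lamP L lam y := by
  unfold lamP
  exact continuous_finset_sum _ (fun k _ => continuous_const.mul (continuous_pow _))

lemma continuous_lamD : Continuous fun y => lamD L lam y := by
  unfold lamD
  exact continuous_finset_sum _ (fun k _ => continuous_const.mul (continuous_pow _))

lemma continuous_xF : Continuous fun y => xF L lam ε y := by
  unfold xF; exact continuous_const.mul continuous_lamP

lemma continuous_xD : Continuous fun y => xD L lam ε y := by
  unfold xD; exact continuous_const.mul continuous_lamD

lemma continuous_eF : Continuous fun y => eF L lam ε y := by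
  unfold eF; exact continuous_xF.mul continuous_id

end Cont

section MainAux

variable {dc : ℕ} {δll δlr : ℕ → ℕ → ℝ → ℝ}

/-- per-k sum of the vv right-hand sides -/
lemma sum_vvRHS (hL2 : ∀ k ∈ L, 2 ≤ k) {k : ℕ} (hk : k ∈ L) (y : ℝ) :
    ∑ s ∈ L, (-(xF L lam ε y) *
          (((s : ℝ) * lhat lam ε s y / eF L lam ε y ^ 2) * ∑ t ∈ L, δll k t y
            + ((k : ℝ) * lhat lam ε k y / eF L lam ε y ^ 2) * ∑ t ∈ L, δll s t y
            - (((k : ℝ) + (s : ℝ)) / eF L lam ε y) * δll k s y)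
        - xF L lam ε y * (k : ℝ) * (s : ℝ) * (lhat lam ε k y / eF L lam ε y) *
            ((if k = s then (1 : ℝ) else 0) - lhat lam ε s y / eF L lam ε y))
      = (-(xF L lam ε y / eF L lam ε y ^ 2) * (∑ t ∈ L, δll k t y)
          + xF L lam ε y * (k:ℝ) * lhat lam ε k y / eF L lam ε y ^ 2)
            * (eF L lam ε y + y^2 * xD L lam ε y)
        - (xF L lam ε y * ((k:ℝ) * lhat lam ε k y) / eF L lam ε y ^ 2)
            * (∑ s ∈ L, ∑ t ∈ L, δll s t y)
        + (xF L lam ε y / eF L lam ε y)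
            * ((k:ℝ) * (∑ t ∈ L, δll k t y) + ∑ s ∈ L, (s:ℝ) * δll k s y)
        - xF L lam ε y * (k:ℝ) * (lhat lam ε k y / eF L lam ε y) * (k:ℝ) := by
  have hper : ∀ s ∈ L, (-(xF L lam ε y) *
          (((s : ℝ) * lhat lam ε s y / eF L lam ε y ^ 2) * ∑ t ∈ L, δll k t y
            + ((k : ℝ) * lhat lam ε k y / eF L lam ε y ^ 2) * ∑ t ∈ L, δll s t y
            - (((k : ℝ) + (s : ℝ)) / eF L lam ε y) * δll k s y)
        - xF L lam ε y * (k : ℝ) * (s : ℝ) * (lhat lam ε k y / eF L lam ε y) *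
            ((if k = s then (1 : ℝ) else 0) - lhat lam ε s y / eF L lam ε y))
      = (-(xF L lam ε y / eF L lam ε y ^ 2) * (∑ t ∈ L, δll k t y)
          + xF L lam ε y * (k:ℝ) * lhat lam ε k y / eF L lam ε y ^ 2) * ((s:ℝ) * lhat lam ε s y)
        + (-(xF L lam ε y * ((k:ℝ) * lhat lam ε k y) / eF L lam ε y ^ 2))
            * (∑ t ∈ L, δll s t y)
        + (xF L lam ε y / eF L lam ε y) * ((k:ℝ) * δll k s y + (s:ℝ) * δll k s y)
        + (-(xF L lam ε y * (k:ℝ) * (lhat lam ε k y / eF L lam ε y)))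
            * (if k = s then (s:ℝ) else 0) := by
    intro s _
    by_cases h : k = s
    · subst h; simp only [if_true, ite_true, if_pos rfl]; ring
    · simp only [h, if_false, ite_false, if_neg h]; ring
  rw [Finset.sum_congr rfl hper]
  rw [Finset.sum_add_distrib, Finset.sum_add_distrib, Finset.sum_add_distrib,
    ← Finset.mul_sum, ← Finset.mul_sum, ← Finset.mul_sum, ← Finset.mul_sum,
    sum_klhat hL2, Finset.sum_ite_eq, if_pos hk]
  rw [Finset.sum_add_distrib, ← Finset.mul_sum]
  rw [show (∑ s ∈ L, (s:ℝ) * δll k s y) = ∑ s ∈ L, (s:ℝ) * δll k s y from rfl]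
  ring


/-- per-k sum of the vc right-hand sides -/
lemma sum_vcRHS (hR2 : ∀ k ∈ R, 2 ≤ k) (hdcR : dc ∈ R) (hdcMax : ∀ i ∈ R, i ≤ dc)
    (hrhoSum : ∑ k ∈ R, rho k = 1) {k : ℕ} {y : ℝ} (hxne : xF L lam ε y ≠ 0) :
    ∑ j ∈ Finset.Icc 1 (dc - 1),
      (2 * (xD L lam ε y / eF L lam ε y) * Gf L R lam rho ε dc j y * ∑ t ∈ L, δll k t y
        - (Gf L R lam rho ε dc j y / y ^ 2) * ∑ i ∈ L, ((i : ℝ) - 1) * δll k i y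
        - xF L lam ε y * (aF L lam ε y - (k : ℝ)) * ((k : ℝ) * lhat lam ε k y / eF L lam ε y)
            * (Gf L R lam rho ε dc j y / y)
        - ((k : ℝ) * lhat lam ε k y / (eF L lam ε y * y)) * ∑ t ∈ L, δlr t j y
        + ((k : ℝ) / y) * δlr k j y
        - (j : ℝ) * (xD L lam ε y / xF L lam ε y) *
            ((if j + 1 = dc then
                (∑ t ∈ L, δll k t y) - ∑ j' ∈ Finset.Icc 1 (dc - 1), δlr k j' y
              else δlr k (j + 1) y) - δlr k j y))
      = (2 * (xD L lam ε y / eF L lam ε y) * (∑ t ∈ L, δll k t y)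
          - (1 / y ^ 2) * (∑ i ∈ L, ((i : ℝ) - 1) * δll k i y)
          - xF L lam ε y * (aF L lam ε y - (k : ℝ)) * ((k : ℝ) * lhat lam ε k y / eF L lam ε y)
            * (1 / y)) * (-Gf L R lam rho ε dc dc y - y)
        - ((k : ℝ) * lhat lam ε k y / (eF L lam ε y * y)) *
            (∑ j ∈ Finset.Icc 1 (dc - 1), ∑ t ∈ L, δlr t j y)
        + ((k : ℝ) / y) * (∑ j ∈ Finset.Icc 1 (dc - 1), δlr k j y)
        - (xD L lam ε y / xF L lam ε y) *
            (((dc:ℝ) - 1) * ((∑ t ∈ L, δll k t y) - ∑ j ∈ Finset.Icc 1 (dc - 1), δlr k j y)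
              - ∑ j ∈ Finset.Icc 1 (dc - 1), δlr k j y) := by
  have hdc2 : 2 ≤ dc := hR2 dc hdcR
  set Sk : ℝ := (∑ t ∈ L, δll k t y) - ∑ j' ∈ Finset.Icc 1 (dc - 1), δlr k j' y with hSk
  set q : ℕ → ℝ := fun m => if m = dc then Sk else δlr k m y with hq
  have hper : ∀ j ∈ Finset.Icc 1 (dc - 1),
      (2 * (xD L lam ε y / eF L lam ε y) * Gf L R lam rho ε dc j y * ∑ t ∈ L, δll k t y
        - (Gf L R lam rho ε dc j y / y ^ 2) * ∑ i ∈ L, ((i : ℝ) - 1) * δll k i y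
        - xF L lam ε y * (aF L lam ε y - (k : ℝ)) * ((k : ℝ) * lhat lam ε k y / eF L lam ε y)
            * (Gf L R lam rho ε dc j y / y)
        - ((k : ℝ) * lhat lam ε k y / (eF L lam ε y * y)) * ∑ t ∈ L, δlr t j y
        + ((k : ℝ) / y) * δlr k j y
        - (j : ℝ) * (xD L lam ε y / xF L lam ε y) *
            ((if j + 1 = dc then
                (∑ t ∈ L, δll k t y) - ∑ j' ∈ Finset.Icc 1 (dc - 1), δlr k j' y
              else δlr k (j + 1) y) - δlr k j y))
      = (2 * (xD L lam ε y / eF L lam ε y) * (∑ t ∈ L, δll k t y)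
          - (1 / y ^ 2) * (∑ i ∈ L, ((i : ℝ) - 1) * δll k i y)
          - xF L lam ε y * (aF L lam ε y - (k : ℝ)) * ((k : ℝ) * lhat lam ε k y / eF L lam ε y)
            * (1 / y)) * Gf L R lam rho ε dc j y
        + (-((k : ℝ) * lhat lam ε k y / (eF L lam ε y * y))) * (∑ t ∈ L, δlr t j y)
        + ((k : ℝ) / y) * δlr k j y
        + (-(xD L lam ε y / xF L lam ε y)) * ((j:ℝ) * (q (j+1) - q j)) := by
    intro j hj
    simp only [Finset.mem_Icc] at hj
    have h1 : (if j + 1 = dc then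
        (∑ t ∈ L, δll k t y) - ∑ j' ∈ Finset.Icc 1 (dc - 1), δlr k j' y
      else δlr k (j + 1) y) = q (j + 1) := by
      by_cases h : j + 1 = dc
      · rw [if_pos h]; exact (if_pos h).symm
      · rw [if_neg h]; exact (if_neg h).symm
    have h2 : δlr k j y = q j := (if_neg (show ¬ j = dc by omega)).symm
    rw [h1, h2]
    ring
  rw [Finset.sum_congr rfl hper]
  rw [Finset.sum_add_distrib, Finset.sum_add_distrib, Finset.sum_add_distrib,
    ← Finset.mul_sum, ← Finset.mul_sum, ← Finset.mul_sum, ← Finset.mul_sum,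
    sum_G_eq hR2 hdcR hdcMax hrhoSum hxne, telescope_aux]
  have hq1 : q (dc - 1 + 1) = Sk := by
    show (if dc - 1 + 1 = dc then Sk else _) = Sk
    rw [if_pos (by omega)]
  have hq2 : ∑ j ∈ Finset.Icc 1 (dc-1), q j = ∑ j ∈ Finset.Icc 1 (dc-1), δlr k j y := by
    apply Finset.sum_congr rfl
    intro j hj
    simp only [Finset.mem_Icc] at hj
    exact if_neg (show ¬ j = dc by omega)
  rw [hq1, hq2]
  have hcast : ((dc - 1 : ℕ) : ℝ) = (dc : ℝ) - 1 := by
    push_cast [Nat.cast_sub (by omega : 1 ≤ dc)]; ring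
  rw [hcast, hSk]
  ring


lemma PPhi_one : PPhi L lam 1 = 0 := by
  unfold PPhi; simp

lemma Pm0_one (hlamSum : ∑ k ∈ L, lam k = 1) : Pm0 L lam 1 = 1 := by
  unfold Pm0; simp only [one_pow, mul_one]; exact hlamSum

lemma lamP_one (hlamSum : ∑ k ∈ L, lam k = 1) : lamP L lam 1 = 1 := by
  unfold lamP; simp only [one_pow, mul_one]; exact hlamSum

lemma Pbeta_one (hlamSum : ∑ k ∈ L, lam k = 1) (k : ℕ) :
    Pbeta L lam ε k 1 = ε * (1 - ε) * lam k := by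
  rw [Pbeta, PPhi_one, Pm0_one hlamSum]
  simp

lemma continuous_lhat {k : ℕ} : Continuous fun y => lhat lam ε k y := by
  unfold lhat; exact continuous_const.mul (continuous_pow _)

lemma sum_vvRHS_inv (hL2 : ∀ k ∈ L, 2 ≤ k) {k : ℕ} (hk : k ∈ L) {y : ℝ}
    (hene : eF L lam ε y ≠ 0) :
    ∑ s ∈ L, (1/(s:ℝ)) * (-(xF L lam ε y) *
          (((s : ℝ) * lhat lam ε s y / eF L lam ε y ^ 2) * ∑ t ∈ L, δll k t y
            + ((k : ℝ) * lhat lam ε k y / eF L lam ε y ^ 2) * ∑ t ∈ L, δll s t y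
            - (((k : ℝ) + (s : ℝ)) / eF L lam ε y) * δll k s y)
        - xF L lam ε y * (k : ℝ) * (s : ℝ) * (lhat lam ε k y / eF L lam ε y) *
            ((if k = s then (1 : ℝ) else 0) - lhat lam ε s y / eF L lam ε y))
      = (xF L lam ε y * (k:ℝ) / eF L lam ε y) * (∑ s ∈ L, (1/(s:ℝ)) * δll k s y)
        - (xF L lam ε y * (k:ℝ) * lhat lam ε k y / eF L lam ε y ^ 2) *
            (∑ s ∈ L, (1/(s:ℝ)) * ∑ t ∈ L, δll s t y) := by
  have hper : ∀ s ∈ L, (1/(s:ℝ)) * (-(xF L lam ε y) *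
          (((s : ℝ) * lhat lam ε s y / eF L lam ε y ^ 2) * ∑ t ∈ L, δll k t y
            + ((k : ℝ) * lhat lam ε k y / eF L lam ε y ^ 2) * ∑ t ∈ L, δll s t y
            - (((k : ℝ) + (s : ℝ)) / eF L lam ε y) * δll k s y)
        - xF L lam ε y * (k : ℝ) * (s : ℝ) * (lhat lam ε k y / eF L lam ε y) *
            ((if k = s then (1 : ℝ) else 0) - lhat lam ε s y / eF L lam ε y))
      = (-(xF L lam ε y / eF L lam ε y ^ 2) * (∑ t ∈ L, δll k t y)
            + xF L lam ε y * (k:ℝ) * (lhat lam ε k y / eF L lam ε y ^ 2)) * lhat lam ε s y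
        + (-(xF L lam ε y * ((k:ℝ) * lhat lam ε k y) / eF L lam ε y ^ 2))
            * ((1/(s:ℝ)) * ∑ t ∈ L, δll s t y)
        + (xF L lam ε y / eF L lam ε y) * δll k s y
        + ((xF L lam ε y / eF L lam ε y) * (k:ℝ)) * ((1/(s:ℝ)) * δll k s y)
        + (-(xF L lam ε y * (k:ℝ) * (lhat lam ε k y / eF L lam ε y)))
            * (if k = s then (1:ℝ) else 0) := by
    intro s hs
    have hs0 : (s:ℝ) ≠ 0 := by have := hL2 s hs; positivity
    by_cases h : k = s
    · subst h; simp only [if_pos rfl]; field_simp; ring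
    · simp only [if_neg h]; field_simp; ring
  rw [Finset.sum_congr rfl hper]
  simp only [Finset.sum_add_distrib]
  rw [← Finset.mul_sum, ← Finset.mul_sum, ← Finset.mul_sum, ← Finset.mul_sum,
    ← Finset.mul_sum, sum_lhat hL2, Finset.sum_ite_eq, if_pos hk]
  field_simp
  ring

set_option maxHeartbeats 2000000 in
lemma DA_eq (hL : L.Nonempty) (hL2 : ∀ k ∈ L, 2 ≤ k) (hpos : ∀ k ∈ L, 0 < lam k)
    (hR2 : ∀ k ∈ R, 2 ≤ k) (hdcR : dc ∈ R) (hdcMax : ∀ i ∈ R, i ≤ dc)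
    (hrhoSum : ∑ k ∈ R, rho k = 1) (hε : ε ∈ Set.Ioo (0:ℝ) 1) {y : ℝ}
    (hy : y ∈ Set.Ioc (0:ℝ) 1)
    (hsym : ∀ k ∈ L, ∀ s ∈ L, δll k s y = δll s k y)
    (hbval : ∀ k ∈ L, (∑ s ∈ L, 1/(s:ℝ) * δll k s y) = Pbeta L lam ε k y) :
    ∑ k ∈ L, (1/(k:ℝ)) *
      ((∑ s ∈ L, (-(xF L lam ε y) *
          (((s : ℝ) * lhat lam ε s y / eF L lam ε y ^ 2) * ∑ t ∈ L, δll k t y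
            + ((k : ℝ) * lhat lam ε k y / eF L lam ε y ^ 2) * ∑ t ∈ L, δll s t y
            - (((k : ℝ) + (s : ℝ)) / eF L lam ε y) * δll k s y)
        - xF L lam ε y * (k : ℝ) * (s : ℝ) * (lhat lam ε k y / eF L lam ε y) *
            ((if k = s then (1 : ℝ) else 0) - lhat lam ε s y / eF L lam ε y)))
      - ∑ j ∈ Finset.Icc 1 (dc - 1),
        (2 * (xD L lam ε y / eF L lam ε y) * Gf L R lam rho ε dc j y * ∑ t ∈ L, δll k t y
          - (Gf L R lam rho ε dc j y / y ^ 2) * ∑ i ∈ L, ((i : ℝ) - 1) * δll k i y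
          - xF L lam ε y * (aF L lam ε y - (k : ℝ)) * ((k : ℝ) * lhat lam ε k y / eF L lam ε y)
              * (Gf L R lam rho ε dc j y / y)
          - ((k : ℝ) * lhat lam ε k y / (eF L lam ε y * y)) * ∑ t ∈ L, δlr t j y
          + ((k : ℝ) / y) * δlr k j y
          - (j : ℝ) * (xD L lam ε y / xF L lam ε y) *
              ((if j + 1 = dc then
                  (∑ t ∈ L, δll k t y) - ∑ j' ∈ Finset.Icc 1 (dc - 1), δlr k j' y
                else δlr k (j + 1) y) - δlr k j y)))
      = (dc:ℝ) * (xD L lam ε y / xF L lam ε y) *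
          (∑ k ∈ L, (1/(k:ℝ)) * ((∑ t ∈ L, δll k t y) - ∑ j ∈ Finset.Icc 1 (dc - 1), δlr k j y))
        + 2 * (xD L lam ε y / eF L lam ε y) * Gf L R lam rho ε dc dc y *
            (∑ t ∈ L, Pbeta L lam ε t y)
        - (Gf L R lam rho ε dc dc y / y^2) * (∑ t ∈ L, ((t:ℝ) - 1) * Pbeta L lam ε t y) := by
  have hy0 : 0 < y := hy.1
  have hyne : y ≠ 0 := hy0.ne'
  have hn0 : 0 < lamP L lam y := lamP_pos hL hpos hy0
  have hε0 : ε ≠ 0 := hε.1.ne'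
  have hxne : xF L lam ε y ≠ 0 := by rw [xF]; positivity
  have hene : eF L lam ε y ≠ 0 := by rw [eF]; exact mul_ne_zero hxne hyne
  have hstep1 : ∀ k ∈ L, (1/(k:ℝ)) * ((∑ s ∈ L, (-(xF L lam ε y) *
          (((s : ℝ) * lhat lam ε s y / eF L lam ε y ^ 2) * ∑ t ∈ L, δll k t y
            + ((k : ℝ) * lhat lam ε k y / eF L lam ε y ^ 2) * ∑ t ∈ L, δll s t y
            - (((k : ℝ) + (s : ℝ)) / eF L lam ε y) * δll k s y)
        - xF L lam ε y * (k : ℝ) * (s : ℝ) * (lhat lam ε k y / eF L lam ε y) *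
            ((if k = s then (1 : ℝ) else 0) - lhat lam ε s y / eF L lam ε y)))
      - ∑ j ∈ Finset.Icc 1 (dc - 1),
        (2 * (xD L lam ε y / eF L lam ε y) * Gf L R lam rho ε dc j y * ∑ t ∈ L, δll k t y
          - (Gf L R lam rho ε dc j y / y ^ 2) * ∑ i ∈ L, ((i : ℝ) - 1) * δll k i y
          - xF L lam ε y * (aF L lam ε y - (k : ℝ)) * ((k : ℝ) * lhat lam ε k y / eF L lam ε y)
              * (Gf L R lam rho ε dc j y / y)
          - ((k : ℝ) * lhat lam ε k y / (eF L lam ε y * y)) * ∑ t ∈ L, δlr t j y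
          + ((k : ℝ) / y) * δlr k j y
          - (j : ℝ) * (xD L lam ε y / xF L lam ε y) *
              ((if j + 1 = dc then
                  (∑ t ∈ L, δll k t y) - ∑ j' ∈ Finset.Icc 1 (dc - 1), δlr k j' y
                else δlr k (j + 1) y) - δlr k j y)))
      = (2 * (xD L lam ε y / eF L lam ε y) * Gf L R lam rho ε dc dc y
            + Gf L R lam rho ε dc dc y / y^2) * ((1/(k:ℝ)) * (∑ t ∈ L, δll k t y))
        + (-(Gf L R lam rho ε dc dc y / y^2)) * ((1/(k:ℝ)) * (∑ s ∈ L, (s:ℝ) * δll k s y))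
        + (-(Gf L R lam rho ε dc dc y / y^2) * ((xD L lam ε y * y + xF L lam ε y) / xF L lam ε y)
            - (1/(eF L lam ε y * y)) * ((∑ s ∈ L, ∑ t ∈ L, δll s t y)
                - ∑ j ∈ Finset.Icc 1 (dc - 1), ∑ t ∈ L, δlr t j y)) * lhat lam ε k y
        + (Gf L R lam rho ε dc dc y / y^2) * ((k:ℝ) * lhat lam ε k y)
        + (1/y) * ((∑ t ∈ L, δll k t y) - ∑ j ∈ Finset.Icc 1 (dc - 1), δlr k j y)
        + ((dc:ℝ) * (xD L lam ε y / xF L lam ε y)) *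
            ((1/(k:ℝ)) * ((∑ t ∈ L, δll k t y) - ∑ j ∈ Finset.Icc 1 (dc - 1), δlr k j y)) := by
    intro k hk
    rw [sum_vvRHS hL2 hk y, sum_vcRHS hR2 hdcR hdcMax hrhoSum hxne]
    have hQk : ∑ i ∈ L, ((i : ℝ) - 1) * δll k i y
        = (∑ s ∈ L, (s:ℝ) * δll k s y) - ∑ t ∈ L, δll k t y := by
      rw [← Finset.sum_sub_distrib]
      exact Finset.sum_congr rfl (fun i _ => by ring)
    rw [hQk]
    have hk0 : (k:ℝ) ≠ 0 := by
      have := hL2 k hk; positivity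
    simp only [aF, eF]
    set x := xF L lam ε y with hxd
    set xd := xD L lam ε y with hxdd
    set G := Gf L R lam rho ε dc dc y with hGd
    set lh := lhat lam ε k y with hlhd
    set Rk := ∑ t ∈ L, δll k t y with hRkd
    set Mk := ∑ s ∈ L, (s:ℝ) * δll k s y with hMkd
    set PSk := ∑ j ∈ Finset.Icc 1 (dc - 1), δlr k j y with hPSkd
    set T := ∑ s ∈ L, ∑ t ∈ L, δll s t y with hTd
    set P := ∑ j ∈ Finset.Icc 1 (dc - 1), ∑ t ∈ L, δlr t j y with hPd
    field_simp
    ring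
  rw [Finset.sum_congr rfl hstep1]
  simp only [Finset.sum_add_distrib]
  rw [← Finset.mul_sum, ← Finset.mul_sum, ← Finset.mul_sum, ← Finset.mul_sum,
    ← Finset.mul_sum, ← Finset.mul_sum]
  rw [sum_lhat hL2, sum_klhat hL2]
  have hS1 : ∑ k ∈ L, (1/(k:ℝ)) * (∑ t ∈ L, δll k t y) = ∑ t ∈ L, Pbeta L lam ε t y := by
    calc ∑ k ∈ L, (1/(k:ℝ)) * (∑ t ∈ L, δll k t y)
        = ∑ k ∈ L, ∑ t ∈ L, (1/(k:ℝ)) * δll t k y := by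
          apply Finset.sum_congr rfl
          intro k hk
          rw [Finset.mul_sum]
          exact Finset.sum_congr rfl (fun t ht => by rw [hsym k hk t ht])
      _ = ∑ t ∈ L, ∑ k ∈ L, (1/(k:ℝ)) * δll t k y := Finset.sum_comm
      _ = ∑ t ∈ L, Pbeta L lam ε t y := Finset.sum_congr rfl (fun t ht => hbval t ht)
  have hS2 : ∑ k ∈ L, (1/(k:ℝ)) * (∑ s ∈ L, (s:ℝ) * δll k s y)
      = ∑ t ∈ L, (t:ℝ) * Pbeta L lam ε t y := by
    calc ∑ k ∈ L, (1/(k:ℝ)) * (∑ s ∈ L, (s:ℝ) * δll k s y)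
        = ∑ k ∈ L, ∑ s ∈ L, (s:ℝ) * ((1/(k:ℝ)) * δll s k y) := by
          apply Finset.sum_congr rfl
          intro k hk
          rw [Finset.mul_sum]
          exact Finset.sum_congr rfl (fun s hs => by rw [hsym k hk s hs]; ring)
      _ = ∑ s ∈ L, ∑ k ∈ L, (s:ℝ) * ((1/(k:ℝ)) * δll s k y) := Finset.sum_comm
      _ = ∑ t ∈ L, (t:ℝ) * Pbeta L lam ε t y := by
          apply Finset.sum_congr rfl
          intro s hs
          rw [← Finset.mul_sum, hbval s hs]
  have hS3 : ∑ k ∈ L, ((∑ t ∈ L, δll k t y) - ∑ j ∈ Finset.Icc 1 (dc - 1), δlr k j y)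
      = (∑ s ∈ L, ∑ t ∈ L, δll s t y) - ∑ j ∈ Finset.Icc 1 (dc - 1), ∑ t ∈ L, δlr t j y := by
    rw [Finset.sum_sub_distrib, Finset.sum_comm (s := L) (t := Finset.Icc 1 (dc-1))]
  have hSW : ∑ t ∈ L, ((t:ℝ) - 1) * Pbeta L lam ε t y
      = (∑ t ∈ L, (t:ℝ) * Pbeta L lam ε t y) - ∑ t ∈ L, Pbeta L lam ε t y := by
    rw [← Finset.sum_sub_distrib]
    exact Finset.sum_congr rfl (fun t _ => by ring)
  rw [hS1, hS2, hS3, hSW]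
  simp only [eF]
  set x := xF L lam ε y with hxd
  set xd := xD L lam ε y with hxdd
  set G := Gf L R lam rho ε dc dc y with hGd
  set SB := ∑ t ∈ L, Pbeta L lam ε t y with hSBd
  set SM := ∑ t ∈ L, (t:ℝ) * Pbeta L lam ε t y with hSMd
  set T := ∑ s ∈ L, ∑ t ∈ L, δll s t y with hTd
  set P := ∑ j ∈ Finset.Icc 1 (dc - 1), ∑ t ∈ L, δlr t j y with hPd
  set A := ∑ k ∈ L, (1/(k:ℝ)) * ((∑ t ∈ L, δll k t y) - ∑ j ∈ Finset.Icc 1 (dc - 1), δlr k j y) with hAd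
  field_simp
  ring

end MainAux
end Aux

set_option maxHeartbeats 2000000 in
theorem statement_11
    (L R : Finset ℕ) (hL : L.Nonempty) (hR : R.Nonempty)
    (hL2 : ∀ k ∈ L, 2 ≤ k) (hR2 : ∀ k ∈ R, 2 ≤ k)
    (lam rho : ℕ → ℝ)
    (hlamPos : ∀ k ∈ L, 0 < lam k) (hlamSum : ∑ k ∈ L, lam k = 1)
    (hrhoPos : ∀ k ∈ R, 0 < rho k) (hrhoSum : ∑ k ∈ R, rho k = 1)
    (ε : ℝ) (hε : ε ∈ Set.Ioo (0 : ℝ) 1)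
    (dc : ℕ) (hdc : dc = R.max' hR)
    (δll : ℕ → ℕ → ℝ → ℝ) (hvv : CEvv L lam ε δll)
    (δlr : ℕ → ℕ → ℝ → ℝ) (hvc : CEvc L R lam rho ε dc δll δlr) :
    ∀ y ∈ Set.Ioc (0 : ℝ) 1,
      (∑ k ∈ L, (1 / (k : ℝ)) *
          ((∑ t ∈ L, δll k t y) - ∑ j ∈ Finset.Icc 1 (dc - 1), δlr k j y)) =
        ε * (1 - ε) * (∑ i ∈ L, lam i / (i : ℝ) * (y ^ i - 1)) * (xD L lam ε y / xF L lam ε y) * Gf L R lam rho ε dc dc y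
        - (1 - ε) * xF L lam ε y * Gf L R lam rho ε dc dc y := by
  obtain ⟨hε0, hε1⟩ := hε
  have hεne : ε ≠ 0 := hε0.ne'
  intro y₀ hy₀
  have hy₀0 : 0 < y₀ := hy₀.1
  have hy₀1 : y₀ ≤ 1 := hy₀.2
  have hdcR : dc ∈ R := by rw [hdc]; exact R.max'_mem hR
  have hdcMax : ∀ i ∈ R, i ≤ dc := by intro i hi; rw [hdc]; exact R.le_max' i hi
  have hdc2 : 2 ≤ dc := hR2 dc hdcR
  have hsub : Set.Icc y₀ 1 ⊆ Set.Ioc (0:ℝ) 1 := fun t ht => ⟨lt_of_lt_of_le hy₀0 ht.1, ht.2⟩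
  have htpos : ∀ t ∈ Set.Icc y₀ 1, 0 < t := fun t ht => lt_of_lt_of_le hy₀0 ht.1
  have hn0pos : ∀ t ∈ Set.Icc y₀ 1, 0 < lamP L lam t := fun t ht => lamP_pos hL hlamPos (htpos t ht)
  have hxpos : ∀ t ∈ Set.Icc y₀ 1, 0 < xF L lam ε t := fun t ht => by
    rw [xF]; exact mul_pos hε0 (hn0pos t ht)
  have hepos : ∀ t ∈ Set.Icc y₀ 1, 0 < eF L lam ε t := fun t ht => by
    rw [eF]; exact mul_pos (hxpos t ht) (htpos t ht)
  have hm0ne : ∀ t ∈ Set.Icc y₀ 1, Pm0 L lam t ≠ 0 := fun t ht =>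
    (Pm0_pos hL hL2 hlamPos (htpos t ht)).ne'
  -- STEP 1 : symmetry of δll
  have hsym : ∀ t ∈ Set.Icc y₀ 1, ∀ k ∈ L, ∀ s ∈ L, δll k s t = δll s k t := by
    intro t ht k hk s hs
    have key := linear_ODE_unique (a := y₀) (b := 1) (ι := Unit)
      (fun u _ _ => xF L lam ε u * ((k:ℝ) + (s:ℝ)) / eF L lam ε u)
      (fun _ _ => ((continuous_xF.mul continuous_const).continuousOn).div
        continuous_eF.continuousOn (fun u hu => (hepos u hu).ne'))
      (fun u _ => δll k s u - δll s k u)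
      ?_ ?_ t ht
    · have h0 := congrFun key ()
      simpa [sub_eq_zero] using h0
    · intro u hu
      apply hasDerivWithinAt_pi.mpr
      intro i
      have hd := ((hvv.1 k hk s hs u (hsub hu)).mono hsub).fun_sub
        ((hvv.1 s hs k hk u (hsub hu)).mono hsub)
      convert hd using 1
      simp only [Finset.univ_unique, Finset.sum_singleton]
      by_cases hks : k = s
      · subst hks; ring
      · rw [if_neg hks, if_neg (fun h => hks h.symm)]; ring
    · funext i
      show δll k s 1 - δll s k 1 = 0
      rw [hvv.2 k hk s hs, hvv.2 s hs k hk]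
      by_cases hks : k = s
      · subst hks; ring
      · rw [if_neg hks, if_neg (fun h => hks h.symm)]; ring
  -- STEP 2 : closed form for the (1/s)-weighted row sums
  have hbval : ∀ t ∈ Set.Icc y₀ 1, ∀ k ∈ L,
      (∑ s ∈ L, 1/(s:ℝ) * δll k s t) = Pbeta L lam ε k t := by
    have key := linear_ODE_unique (a := y₀) (b := 1) (ι := {x : ℕ // x ∈ L})
      (fun t u v => (if v = u then ((u:ℕ):ℝ)/t else 0)
        - (((u:ℕ):ℝ) * lhat lam ε (u:ℕ) t / (eF L lam ε t * t)))
      ?_ (fun t u => (∑ s ∈ L, 1/(s:ℝ) * δll (u:ℕ) s t) - Pbeta L lam ε (u:ℕ) t) ?_ ?_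
    · intro t ht k hk
      have h0 := congrFun (key t ht) ⟨k, hk⟩
      simpa [sub_eq_zero] using h0
    · intro u v
      apply ContinuousOn.sub
      · by_cases h : v = u
        · simp only [if_pos h]
          exact continuousOn_const.div continuousOn_id (fun t ht => (htpos t ht).ne')
        · simp only [if_neg h]; exact continuousOn_const
      · apply ContinuousOn.div
        · exact (continuous_const.mul continuous_lhat).continuousOn
        · exact (continuous_eF.mul continuous_id).continuousOn
        · intro t ht; exact (mul_pos (hepos t ht) (htpos t ht)).ne'
    · intro t ht
      apply hasDerivWithinAt_pi.mpr
      rintro ⟨k, hk⟩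
      have hd1 := HasDerivWithinAt.fun_sum (u := L) (fun s hs =>
        ((hvv.1 k hk s hs t (hsub ht)).mono hsub).const_mul (1/(s:ℝ)))
      have hd2 := (hasDerivAt_Pbeta (ε := ε) hL2 k (hm0ne t ht)).hasDerivWithinAt
        (s := Set.Icc y₀ 1)
      have hd := hd1.fun_sub hd2
      convert hd using 1
      have hper : ∀ s ∈ L, (1/(s:ℝ)) * (-(xF L lam ε t) *
            (((s : ℝ) * lhat lam ε s t / eF L lam ε t ^ 2) * ∑ u ∈ L, δll k u t
              + ((k : ℝ) * lhat lam ε k t / eF L lam ε t ^ 2) * ∑ u ∈ L, δll s u t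
              - (((k : ℝ) + (s : ℝ)) / eF L lam ε t) * δll k s t)
          - xF L lam ε t * (k : ℝ) * (s : ℝ) * (lhat lam ε k t / eF L lam ε t) *
              ((if k = s then (1 : ℝ) else 0) - lhat lam ε s t / eF L lam ε t)) =
          (1/(s:ℝ)) * (-(xF L lam ε t) *
            (((s : ℝ) * lhat lam ε s t / eF L lam ε t ^ 2) * ∑ u ∈ L, δll k u t
              + ((k : ℝ) * lhat lam ε k t / eF L lam ε t ^ 2) * ∑ u ∈ L, δll s u t
              - (((k : ℝ) + (s : ℝ)) / eF L lam ε t) * δll k s t)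
          - xF L lam ε t * (k : ℝ) * (s : ℝ) * (lhat lam ε k t / eF L lam ε t) *
              ((if k = s then (1 : ℝ) else 0) - lhat lam ε s t / eF L lam ε t)) :=
        fun s _ => rfl
      rw [sum_vvRHS_inv hL2 hk (hepos t ht).ne',
        Pbeta_ode hL2 (htpos t ht) (hn0pos t ht) hεne hk]
      have hBsym : (∑ s ∈ L, (1/(s:ℝ)) * ∑ u ∈ L, δll s u t)
          = ∑ u ∈ L, (∑ s ∈ L, 1/(s:ℝ) * δll u s t) := by
        calc ∑ s ∈ L, (1/(s:ℝ)) * ∑ u ∈ L, δll s u t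
            = ∑ s ∈ L, ∑ u ∈ L, (1/(s:ℝ)) * δll u s t := by
              apply Finset.sum_congr rfl
              intro s hs
              rw [Finset.mul_sum]
              exact Finset.sum_congr rfl (fun u hu => by rw [hsym t ht s hs u hu])
          _ = ∑ u ∈ L, ∑ s ∈ L, (1/(s:ℝ)) * δll u s t := Finset.sum_comm
      rw [hBsym]
      simp only [sub_mul, ite_mul, zero_mul, Finset.sum_sub_distrib]
      rw [Finset.sum_ite_eq' Finset.univ (⟨k, hk⟩ : {x : ℕ // x ∈ L}), if_pos (Finset.mem_univ _)]
      rw [← Finset.mul_sum]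
      rw [Finset.sum_coe_sort L
        (fun n => (∑ s ∈ L, 1/(s:ℝ) * δll n s t) - Pbeta L lam ε n t)]
      rw [Finset.sum_sub_distrib]
      have hene := (hepos t ht).ne'
      have htne := (htpos t ht).ne'
      have hxe : eF L lam ε t = xF L lam ε t * t := rfl
      set b := ∑ s ∈ L, 1/(s:ℝ) * δll k s t with hb
      set SB := ∑ u ∈ L, (∑ s ∈ L, 1/(s:ℝ) * δll u s t) with hSB
      set Sβ := ∑ u ∈ L, Pbeta L lam ε u t with hSβ
      rw [hxe] at hene ⊢
      have hxne := (hxpos t ht).ne'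
      field_simp
      ring
    · funext u
      show (∑ s ∈ L, 1/(s:ℝ) * δll (u:ℕ) s 1) - Pbeta L lam ε (u:ℕ) 1 = 0
      have hu0 : ((u:ℕ):ℝ) ≠ 0 := by have := hL2 u.1 u.2; positivity
      have h1 : ∀ s ∈ L, 1/(s:ℝ) * δll (u:ℕ) s 1
          = if (u:ℕ) = s then lam (u:ℕ) * ε * (1-ε) else 0 := by
        intro s hs
        rw [hvv.2 (u:ℕ) u.2 s hs]
        by_cases h : (u:ℕ) = s
        · rw [if_pos h, if_pos h, ← h]
          field_simp
        · rw [if_neg h, if_neg h]; ring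
      rw [Finset.sum_congr rfl h1, Finset.sum_ite_eq, if_pos u.2, Pbeta_one hlamSum]
      ring
  -- STEP 3 : the quantity A equals Ahat
  have hAhat : ∀ t ∈ Set.Icc y₀ 1,
      (∑ k ∈ L, (1/(k:ℝ)) * ((∑ u ∈ L, δll k u t) - ∑ j ∈ Finset.Icc 1 (dc-1), δlr k j t))
        = Ahat L lam rho ε dc t := by
    have key := linear_ODE_unique (a := y₀) (b := 1) (ι := Unit)
      (fun t _ _ => (dc:ℝ) * (xD L lam ε t / xF L lam ε t))
      (fun _ _ => (continuous_const.continuousOn).mul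
        ((continuous_xD.continuousOn).div continuous_xF.continuousOn
          (fun t ht => (hxpos t ht).ne')))
      (fun t _ => (∑ k ∈ L, (1/(k:ℝ)) *
          ((∑ u ∈ L, δll k u t) - ∑ j ∈ Finset.Icc 1 (dc-1), δlr k j t))
        - Ahat L lam rho ε dc t) ?_ ?_
    · intro t ht
      have h0 := congrFun (key t ht) ()
      simpa [sub_eq_zero] using h0
    · intro t ht
      apply hasDerivWithinAt_pi.mpr
      intro i
      have hdA := HasDerivWithinAt.fun_sum (u := L) (fun k hk =>
        ((HasDerivWithinAt.fun_sum (u := L) (fun s hs => (hvv.1 k hk s hs t (hsub ht)).mono hsub)).fun_sub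
          (HasDerivWithinAt.fun_sum (u := Finset.Icc 1 (dc-1)) (fun j hj =>
            (hvc.1 k hk j hj t (hsub ht)).mono hsub))).const_mul (1/(k:ℝ)))
      have hd2 := (hasDerivAt_Ahat (lam := lam) (rho := rho) (ε := ε) hL2 hdc2 t).hasDerivWithinAt
        (s := Set.Icc y₀ 1)
      have hd := hdA.fun_sub hd2
      convert hd using 1
      rw [DA_eq hL hL2 hlamPos hR2 hdcR hdcMax hrhoSum ⟨hε0, hε1⟩ (hsub ht)
          (hsym t ht) (hbval t ht),
        Ahat_ode hL2 hR2 hdcR hdcMax (htpos t ht) (hn0pos t ht) hεne]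
      simp only [Finset.univ_unique, Finset.sum_singleton]
      ring
    · funext i
      show (∑ k ∈ L, (1/(k:ℝ)) *
          ((∑ u ∈ L, δll k u 1) - ∑ j ∈ Finset.Icc 1 (dc-1), δlr k j 1))
        - Ahat L lam rho ε dc 1 = 0
      have hx1 : xF L lam ε 1 = ε := by rw [xF, lamP_one hlamSum, mul_one]
      have hsumG : ∑ j ∈ Finset.Icc 1 (dc-1), Gf L R lam rho ε dc j 1
          = -Gf L R lam rho ε dc dc 1 - 1 :=
        sum_G_eq hR2 hdcR hdcMax hrhoSum (by rw [hx1]; exact hεne)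
      have hper : ∀ k ∈ L, (1/(k:ℝ)) *
          ((∑ u ∈ L, δll k u 1) - ∑ j ∈ Finset.Icc 1 (dc-1), δlr k j 1)
          = lam k * (-(ε*(1-ε)) * Gf L R lam rho ε dc dc 1) := by
        intro k hk
        have hR1 : ∑ u ∈ L, δll k u 1 = (k:ℝ) * lam k * ε * (1-ε) := by
          have h2 : ∀ u ∈ L, δll k u 1
              = if k = u then (k:ℝ) * lam k * ε * (1-ε) else 0 := by
            intro u hu; rw [hvv.2 k hk u hu]; by_cases h : k = u
            · rw [if_pos h, if_pos h]; ring
            · rw [if_neg h, if_neg h]; ring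
          rw [Finset.sum_congr rfl h2, Finset.sum_ite_eq, if_pos hk]
        have hP1 : ∑ j ∈ Finset.Icc 1 (dc-1), δlr k j 1
            = -((k:ℝ) * lam k * ε * (1-ε)) * (-Gf L R lam rho ε dc dc 1 - 1) := by
          have h3 : ∀ j ∈ Finset.Icc 1 (dc-1), δlr k j 1
              = -((k:ℝ)*lam k*ε*(1-ε)) * Gf L R lam rho ε dc j 1 :=
            fun j hj => hvc.2 k hk j hj
          rw [Finset.sum_congr rfl h3, ← Finset.mul_sum, hsumG]
        rw [hR1, hP1]
        have hk0 : (k:ℝ) ≠ 0 := by have := hL2 k hk; positivity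
        field_simp
        ring
      rw [Finset.sum_congr rfl hper, ← Finset.sum_mul, hlamSum, one_mul]
      rw [Gf_dc_eq hR2 hdcR hdcMax, Ahat, PPhi_one, hx1]
      have e2 : ε ^ dc = ε ^ (dc-2) * ε ^ 2 := by
        rw [← pow_add, show dc - 2 + 2 = dc from by omega]
      rw [e2]
      field_simp
      ring
  -- CONCLUSION
  have hAy := hAhat y₀ ⟨le_refl y₀, hy₀1⟩
  rw [hAy, Gf_dc_eq hR2 hdcR hdcMax, Ahat]
  have hxne : xF L lam ε y₀ ≠ 0 := (hxpos y₀ ⟨le_refl _, hy₀1⟩).ne'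
  have e2 : xF L lam ε y₀ ^ dc = xF L lam ε y₀ ^ (dc-2) * xF L lam ε y₀ ^ 2 := by
    rw [← pow_add, show dc - 2 + 2 = dc from by omega]
  rw [e2]
  rw [show (∑ i ∈ L, lam i / (i:ℝ) * (y₀ ^ i - 1)) = PPhi L lam y₀ from rfl]
  field_simp
  ring

end LDPC
end

section
/- Under the threshold conditions y* = 1 − ρ(x̃*) and ρ'(x̃*) ε* λ'(y*) = 1, the explicit solution Δ₁₁ of covariance evolution for δ^{r_1,r_1} evaluated at y = y* satisfies Δ₁₁(y*) = (x* ρ'(x̃*))² · B, where B := [ρ(x̃*)² − ρ(x̃*²) − x̃*² ρ'(x̃*²)] / ρ'(x̃*)² + [1 − 2x* ρ(x̃*)] / ρ'(x̃*) + x*² − ε*² λ(y*²) − ε*² y*² λ'(y*²). Consequently the slope scaling parameter α = √(n/ξ) · √(Δ₁₁(y*)) / |∂R₁/∂ε(ε*, y*)| equals √(n/ξ) · √B / λ(y*). (Corollary 1.) -/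
open Finset

namespace LDPC

theorem statement_17
    (L R : Finset ℕ) (hL : L.Nonempty) (hR : R.Nonempty)
    (hL2 : ∀ k ∈ L, 2 ≤ k) (hR2 : ∀ k ∈ R, 2 ≤ k)
    (lam rho : ℕ → ℝ)
    (hlamPos : ∀ k ∈ L, 0 < lam k) (hlamSum : ∑ k ∈ L, lam k = 1)
    (hrhoPos : ∀ k ∈ R, 0 < rho k) (hrhoSum : ∑ k ∈ R, rho k = 1)
    (dc : ℕ) (hdc : dc = R.max' hR)
    (εstar ystar : ℝ) (hε : εstar ∈ Set.Ioo (0 : ℝ) 1) (hy : ystar ∈ Set.Ioo (0 : ℝ) 1)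
    (xs xt : ℝ) (hxs : xs = εstar * lamP L lam ystar) (hxt : xt = 1 - xs)
    (hth1 : ystar = 1 - rhoP R rho xt)
    (hth2 : rhoD R rho xt * (εstar * lamD L lam ystar) = 1)
    (nxi : ℝ) (hnxi : 0 < nxi)
    (Δ B : ℝ)
    (hΔ : Δ =
      -(Ff L lam εstar ystar) * ((xD L lam εstar ystar / xF L lam εstar ystar) * Gf L R lam rho εstar dc 1 ystar - 1) ^ 2
      + Gf L R lam rho εstar dc 1 ystar ^ 2 *
          (Fd L lam εstar ystar * (xD L lam εstar ystar / xF L lam εstar ystar)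
            - (∑ s ∈ L, εstar ^ 2 * (s : ℝ) * lam s * ystar ^ (2 * s - 2)) + xF L lam εstar ystar ^ 2)
      - Vf L R lam rho εstar 1 1 ystar
      + 2 * Gf L R lam rho εstar dc 1 ystar * (xF L lam εstar ystar * (eF L lam εstar ystar - xF L lam εstar ystar) - (Fd L lam εstar ystar - xF L lam εstar ystar) / 2)
      + rhat L R lam rho εstar 1 ystar
      + (eF L lam εstar ystar - xF L lam εstar ystar) ^ 2)
    (hB : B =
      (rhoP R rho xt ^ 2 - rhoP R rho (xt ^ 2) - xt ^ 2 * rhoD R rho (xt ^ 2)) /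
          rhoD R rho xt ^ 2
        + (1 - 2 * xs * rhoP R rho xt) / rhoD R rho xt
        + xs ^ 2 - εstar ^ 2 * lamP L lam (ystar ^ 2)
        - εstar ^ 2 * ystar ^ 2 * lamD L lam (ystar ^ 2)) :
    Δ = (xs * rhoD R rho xt) ^ 2 * B
    ∧ Real.sqrt nxi * Real.sqrt Δ /
        |deriv (fun e : ℝ =>
          e * lamP L lam ystar * (ystar - 1 + rhoP R rho (1 - e * lamP L lam ystar))) εstar| =
      Real.sqrt nxi * Real.sqrt B / lamP L lam ystar := by
  obtain ⟨hε0, hε1⟩ := hε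
  obtain ⟨hy0, hy1'⟩ := hy
  -- positivity facts
  have hcpos : 0 < lamP L lam ystar := by
    refine Finset.sum_pos (fun k hk => ?_) hL
    exact mul_pos (hlamPos k hk) (pow_pos hy0 _)
  have hxspos : 0 < xs := by rw [hxs]; exact mul_pos hε0 hcpos
  have hldpos : 0 < lamD L lam ystar := by
    refine Finset.sum_pos (fun k hk => ?_) hL
    have h2 := hL2 k hk
    have : (1 : ℝ) ≤ (k : ℝ) - 1 := by
      have : (2 : ℝ) ≤ (k : ℝ) := by exact_mod_cast h2
      linarith
    exact mul_pos (mul_pos (by linarith) (hlamPos k hk)) (pow_pos hy0 _)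
  have hxdpos : 0 < εstar * lamD L lam ystar := mul_pos hε0 hldpos
  have hρdpos : 0 < rhoD R rho xt := by nlinarith [hth2]
  have hρdne : rhoD R rho xt ≠ 0 := ne_of_gt hρdpos
  have hxsne : xs ≠ 0 := ne_of_gt hxspos
  -- basic rewrites
  have hxF : xF L lam εstar ystar = xs := by rw [xF, ← hxs]
  have heF : eF L lam εstar ystar = xs * ystar := by rw [eF, hxF]
  have hxtF : 1 - xF L lam εstar ystar = xt := by rw [hxF, ← hxt]
  have hxDv : xD L lam εstar ystar = εstar * lamD L lam ystar := rfl
  have hxd : rhoD R rho xt * xD L lam εstar ystar = 1 := by rw [hxDv]; exact hth2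
  -- dc ≥ 2
  have hdcR : dc ∈ R := by rw [hdc]; exact R.max'_mem hR
  have hdc2 : 2 ≤ dc := hR2 dc hdcR
  -- rhat 1 = 0
  have hr1 : rhat L R lam rho εstar 1 ystar = 0 := by
    rw [rhat, if_pos rfl, hxF, ← hxt]
    have : ystar - 1 + rhoP R rho xt = 0 := by rw [hth1]; ring
    rw [this, mul_zero]
  -- rhat 2 = xs^2 * ρ'(xt)
  have hr2 : rhat L R lam rho εstar 2 ystar = xs ^ 2 * rhoD R rho xt := by
    rw [rhat, if_neg (by norm_num), rhoD, Finset.mul_sum]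
    refine Finset.sum_congr rfl (fun i hi => ?_)
    have h2 := hR2 i hi
    rw [hxF, ← hxt]
    have hch : ((i - 1).choose (2 - 1) : ℝ) = (i : ℝ) - 1 := by
      rw [show (2 : ℕ) - 1 = 1 from rfl, Nat.choose_one_right]
      push_cast [Nat.cast_sub (by omega : 1 ≤ i)]
      ring
    rw [hch]
    ring
  -- Gf at 1
  have hG1 : Gf L R lam rho εstar dc 1 ystar = xs * rhoD R rho xt := by
    rw [Gf, if_neg (by omega), show (1 : ℕ) + 1 = 2 from rfl, hr1, hr2, hxF]
    push_cast
    field_simp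
    ring
  -- Vf 1 1
  have hV : Vf L R lam rho εstar 1 1 ystar
      = xs ^ 2 * (rhoP R rho (xt ^ 2) + xt ^ 2 * rhoD R rho (xt ^ 2)) := by
    rw [Vf, rhoP, rhoD, Finset.mul_sum, mul_add, Finset.mul_sum, Finset.mul_sum]
    rw [← Finset.sum_add_distrib]
    refine Finset.sum_congr rfl (fun s hs => ?_)
    have h2 := hR2 s hs
    obtain ⟨m, rfl⟩ : ∃ m, s = m + 2 := ⟨s - 2, by omega⟩
    rw [hxF, ← hxt]
    have e1 : 2 * (m + 2) - 1 - 1 = 2 * m + 2 := by omega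
    have e2 : m + 2 - 1 = m + 1 := by omega
    have e3 : m + 2 - 2 = m := by omega
    rw [e1, e2, e3]
    simp only [show (1:ℕ) - 1 = 0 from rfl, Nat.choose_zero_right, Nat.cast_one]
    have p1 : (xt ^ 2) ^ (m + 1) = xt ^ (2 * m + 2) := by
      rw [← pow_mul]; congr 1 <;> omega
    have p2 : (xt ^ 2) ^ m = xt ^ (2 * m) := by
      rw [← pow_mul]
    rw [p1, p2]
    push_cast
    ring
  -- the sum S
  have hS : (∑ s ∈ L, εstar ^ 2 * (s : ℝ) * lam s * ystar ^ (2 * s - 2))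
      = εstar ^ 2 * lamP L lam (ystar ^ 2)
        + εstar ^ 2 * ystar ^ 2 * lamD L lam (ystar ^ 2) := by
    rw [lamP, lamD, Finset.mul_sum, Finset.mul_sum, ← Finset.sum_add_distrib]
    refine Finset.sum_congr rfl (fun s hs => ?_)
    have h2 := hL2 s hs
    obtain ⟨m, rfl⟩ : ∃ m, s = m + 2 := ⟨s - 2, by omega⟩
    have e1 : 2 * (m + 2) - 2 = 2 * m + 2 := by omega
    have e2 : m + 2 - 1 = m + 1 := by omega
    have e3 : m + 2 - 2 = m := by omega
    rw [e1, e2, e3]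
    have p1 : (ystar ^ 2) ^ (m + 1) = ystar ^ (2 * m + 2) := by
      rw [← pow_mul]; congr 1 <;> omega
    have p2 : (ystar ^ 2) ^ m = ystar ^ (2 * m) := by
      rw [← pow_mul]
    rw [p1, p2]
    push_cast
    ring
  -- first conjunct
  have hxdval : xD L lam εstar ystar = 1 / rhoD R rho xt := by
    rw [eq_div_iff hρdne]
    linarith [hxd]
  have hEY : xs * ystar - xs = -(xs * rhoP R rho xt) := by
    rw [hth1]; ring
  have hmain : Δ = (xs * rhoD R rho xt) ^ 2 * B := by
    rw [hΔ, hB, hG1, hV, hS, hr1, hxF, heF, hxdval, hEY]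
    generalize Ff L lam εstar ystar = Fv
    generalize Fd L lam εstar ystar = Fdv
    generalize rhoP R rho xt = p0
    generalize rhoP R rho (xt ^ 2) = p2
    generalize rhoD R rho (xt ^ 2) = pd2
    generalize εstar ^ 2 * lamP L lam (ystar ^ 2) = A1
    generalize εstar ^ 2 * ystar ^ 2 * lamD L lam (ystar ^ 2) = A2
    have hpd' : rhoD R rho xt ≠ 0 := hρdne
    generalize hpd : rhoD R rho xt = pd at hpd'
    field_simp
    ring
  refine ⟨hmain, ?_⟩
  -- derivative computation
  set c := lamP L lam ystar with hc
  have hρderiv : HasDerivAt (fun z => rhoP R rho z) (rhoD R rho (1 - εstar * c)) (1 - εstar * c) := by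
    simp only [rhoP, rhoD]
    refine HasDerivAt.fun_sum (fun k hk => ?_)
    have h2 := hR2 k hk
    have h := (hasDerivAt_pow (k - 1) (1 - εstar * c)).const_mul (rho k)
    have e1 : k - 1 - 1 = k - 2 := by omega
    have e2 : ((k - 1 : ℕ) : ℝ) = (k : ℝ) - 1 := by
      push_cast [Nat.cast_sub (by omega : 1 ≤ k)]; ring
    rw [e1, e2] at h
    convert h using 1
    · rfl
    ring
  have hxteq : xt = 1 - εstar * c := by rw [hxt, hxs]
  have hz : HasDerivAt (fun e : ℝ => 1 - e * c) (-(1 * c)) εstar :=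
    ((hasDerivAt_id εstar).mul_const c).const_sub 1
  have hcomp : HasDerivAt (fun e : ℝ => rhoP R rho (1 - e * c))
      (rhoD R rho (1 - εstar * c) * -(1 * c)) εstar := by have := hρderiv.comp εstar hz; exact this
  have hfull : HasDerivAt (fun e : ℝ => e * c * (ystar - 1 + rhoP R rho (1 - e * c)))
      (1 * c * (ystar - 1 + rhoP R rho (1 - εstar * c))
        + εstar * c * (rhoD R rho (1 - εstar * c) * -(1 * c))) εstar :=
    ((hasDerivAt_id εstar).mul_const c).mul (hcomp.const_add (ystar - 1))
  have hderiv : deriv (fun e : ℝ =>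
      e * lamP L lam ystar * (ystar - 1 + rhoP R rho (1 - e * lamP L lam ystar))) εstar
      = -(xs * c * rhoD R rho xt) := by
    rw [hfull.deriv, ← hxteq]
    have h0 : ystar - 1 + rhoP R rho xt = 0 := by rw [hth1]; ring
    rw [h0, hxs]
    ring
  rw [hderiv, abs_neg, abs_of_pos (by positivity), hmain]
  rw [Real.sqrt_mul (sq_nonneg _) B, Real.sqrt_sq (le_of_lt (by positivity))]
  rw [div_eq_div_iff (by positivity) (ne_of_gt hcpos)]
  ring

end LDPC
end

section
/- For the (d_v, d_c)-regular ensemble, i.e. λ(y) = y^{d_v−1} and ρ(z) = z^{d_c−1} with integers d_v, d_c ≥ 2, under the threshold conditions y* = 1 − (1 − x*)^{d_c−1} and (d_c−1)(1−x*)^{d_c−2} · ε*(d_v−1) y*^{d_v−2} = 1 with x* = ε* y*^{d_v−1}, one has B/(d_v · λ(y*)²) = ε*² · ((d_v−1)/d_v) · (1/x* − 1/y*), where B := [ρ(x̃*)² − ρ(x̃*²) − x̃*² ρ'(x̃*²)]/ρ'(x̃*)² + [1 − 2x* ρ(x̃*)]/ρ'(x̃*) + x*² − ε*² λ(y*²)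 − ε*² y*² λ'(y*²) and x̃* := 1 − x*. Equivalently, the slope scaling parameter of Corollary 1 with n/ξ = 1/d_v equals α = ε* √(((d_v−1)/d_v)(1/x* − 1/y*)). (Remark after Corollary 1.) -/
open Finset

namespace LDPC

theorem statement_18
    (dv dc : ℕ) (hdv : 2 ≤ dv) (hdc : 2 ≤ dc)
    (εs ys : ℝ) (hε : εs ∈ Set.Ioo (0 : ℝ) 1) (hy : ys ∈ Set.Ioo (0 : ℝ) 1)
    (xs xt : ℝ) (hxs : xs = εs * ys ^ (dv - 1)) (hxt : xt = 1 - xs)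
    (hth1 : ys = 1 - xt ^ (dc - 1))
    (hth2 : ((dc : ℝ) - 1) * xt ^ (dc - 2) * (εs * (((dv : ℝ) - 1) * ys ^ (dv - 2))) = 1)
    (B : ℝ)
    (hB : B =
      ((xt ^ (dc - 1)) ^ 2 - (xt ^ 2) ^ (dc - 1)
          - xt ^ 2 * (((dc : ℝ) - 1) * (xt ^ 2) ^ (dc - 2))) /
          (((dc : ℝ) - 1) * xt ^ (dc - 2)) ^ 2
        + (1 - 2 * xs * xt ^ (dc - 1)) / (((dc : ℝ) - 1) * xt ^ (dc - 2))
        + xs ^ 2 - εs ^ 2 * (ys ^ 2) ^ (dv - 1)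
        - εs ^ 2 * ys ^ 2 * (((dv : ℝ) - 1) * (ys ^ 2) ^ (dv - 2))) :
    B / ((dv : ℝ) * (ys ^ (dv - 1)) ^ 2) =
      εs ^ 2 * (((dv : ℝ) - 1) / (dv : ℝ)) * (1 / xs - 1 / ys)
    ∧ Real.sqrt (1 / (dv : ℝ)) * Real.sqrt B / ys ^ (dv - 1) =
      εs * Real.sqrt ((((dv : ℝ) - 1) / (dv : ℝ)) * (1 / xs - 1 / ys)) := by
  obtain ⟨m, rfl⟩ : ∃ m, dv = m + 2 := ⟨dv - 2, by omega⟩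
  obtain ⟨n, rfl⟩ : ∃ n, dc = n + 2 := ⟨dc - 2, by omega⟩
  have e1 : m + 2 - 1 = m + 1 := rfl
  have e2 : m + 2 - 2 = m := rfl
  have e3 : n + 2 - 1 = n + 1 := rfl
  have e4 : n + 2 - 2 = n := rfl
  simp only [e1, e2, e3, e4] at hxs hth1 hth2 hB ⊢
  push_cast at hth2 hB ⊢
  have en : ((n:ℝ)+2-1) = (n:ℝ)+1 := by ring
  have em : ((m:ℝ)+2-1) = (m:ℝ)+1 := by ring
  rw [en] at hB hth2
  rw [em] at hB hth2 ⊢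
  obtain ⟨hε0, hε1⟩ := hε
  obtain ⟨hy0, hy1⟩ := hy
  have hys : ys ≠ 0 := ne_of_gt hy0
  have hxs0 : 0 < xs := by rw [hxs]; positivity
  have hxs1 : xs < 1 := by
    rw [hxs]
    calc εs * ys ^ (m+1) ≤ εs * 1 := by
          gcongr
          exact pow_le_one₀ hy0.le hy1.le
      _ < 1 := by linarith
  have hxsy : xs < ys := by
    rw [hxs]
    calc εs * ys ^ (m+1) < 1 * ys ^ (m+1) := by
          gcongr
      _ = ys ^ (m+1) := one_mul _
      _ ≤ ys ^ 1 := pow_le_pow_of_le_one hy0.le hy1.le (by omega)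
      _ = ys := pow_one _
  have hxt0 : 0 < xt := by rw [hxt]; linarith
  have hb : xt ^ n ≠ 0 := by positivity
  have hn1 : ((n:ℝ)+1) ≠ 0 := by positivity
  have hm2 : ((m:ℝ)+2) ≠ 0 := by positivity
  have hBval : B = ((m:ℝ)+1) * xs * (ys - xs) / ys := by
    rw [hB]
    field_simp
    linear_combination
      (ys*((n:ℝ)+1)^2*(xt^n)^2*((m:ℝ)+2)*(xs+εs*ys^(m+1))
        - (xs*ys+ys-xs)*((m:ℝ)+1)*((n:ℝ)+1)^2*(xt^n)^2) * hxs
      + (-((n:ℝ)+1)*xt^n*ys*(xt+2*xs)) * hth1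
      + (-(xs*ys+ys-xs)*((n:ℝ)+1)*xt^n*ys) * hth2
      + (-((n:ℝ)+1)*xt^n*ys*(1-ys)) * hxt
  have hya : ys ^ (m+1) ≠ 0 := by positivity
  have part1 : B / (((m:ℝ)+2) * (ys ^ (m + 1)) ^ 2) =
      εs ^ 2 * (((m:ℝ)+1) / ((m:ℝ)+2)) * (1 / xs - 1 / ys) := by
    rw [hBval]
    field_simp
    linear_combination
      ((ys - xs) * (xs + εs * ys ^ (m+1))) * hxs
  refine ⟨part1, ?_⟩
  have hT : 0 ≤ (((m:ℝ)+1) / ((m:ℝ)+2)) * (1 / xs - 1 / ys) := by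
    have h1 : 1 / ys ≤ 1 / xs := by
      apply one_div_le_one_div_of_le hxs0 hxsy.le
    have : 0 ≤ 1 / xs - 1 / ys := by linarith
    positivity
  have hBe : B = ((m:ℝ)+2) * ((εs * ys ^ (m+1)) ^ 2 *
      ((((m:ℝ)+1) / ((m:ℝ)+2)) * (1 / xs - 1 / ys))) := by
    have hD : ((m:ℝ)+2) * (ys ^ (m+1)) ^ 2 ≠ 0 := by positivity
    have h := (div_eq_iff hD).mp part1
    rw [h]
    ring
  rw [hBe]
  rw [Real.sqrt_mul (by positivity : (0:ℝ) ≤ ((m:ℝ)+2)),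
    Real.sqrt_mul (by positivity : (0:ℝ) ≤ (εs * ys ^ (m+1)) ^ 2),
    Real.sqrt_sq (by positivity : (0:ℝ) ≤ εs * ys ^ (m+1))]
  rw [show Real.sqrt (1 / ((m:ℝ)+2)) * (Real.sqrt ((m:ℝ)+2) *
      (εs * ys ^ (m+1) * Real.sqrt ((((m:ℝ)+1) / ((m:ℝ)+2)) * (1 / xs - 1 / ys)))) =
      (Real.sqrt (1 / ((m:ℝ)+2)) * Real.sqrt ((m:ℝ)+2)) *
      (εs * ys ^ (m+1) * Real.sqrt ((((m:ℝ)+1) / ((m:ℝ)+2)) * (1 / xs - 1 / ys))) from by ring]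
  rw [← Real.sqrt_mul (by positivity : (0:ℝ) ≤ 1 / ((m:ℝ)+2))]
  rw [show (1 / ((m:ℝ)+2)) * ((m:ℝ)+2) = 1 from by field_simp]
  rw [Real.sqrt_one]
  have : ∀ S : ℝ, 1 * (εs * ys ^ (m+1) * S) / ys ^ (m+1) = εs * S := fun S => by
    field_simp
  exact this _


end LDPC
end
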